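/- arXiv:2301.05703 — 3 statements merged into one kernel-verified Lean document; each statement's English description precedes it below -/
import Mathlib

section
/- Fix (ϑ1,ϑ2,ϑ3,ϑ4) ∈ ℝ⁴ with ϑ1+ϑ2 = 1 and ϑ3+ϑ4 = −1, and for bounded measurable candidates τ̃, μ̃0, μ̃1 on 𝒳 and measurable ẽ with 0 < ẽ(X) < 1 a.s., write the GNPW residual Ψ[τ̃, ẽ, (μ̃0,μ̃1)] = (ϑ1·W + ϑ2·ẽ(X) + ϑ3·W·ẽ(X) + ϑ4·ẽ(X)²)·τ̃(X) − (W−ẽ(X))·[Y − μ̃0(X) − (ϑ2+ϑ4·ẽ(X))(μ̃1(X)−μ̃0(X))]. Then, almost surely: E[Ψ[τ̃, e, (μ̃0,μ̃1)] | σ(X)] = e(X)(1−e(X))·(τ̃(X)−τ(X)) and E[Ψ[τ̃, ẽ, (μ0,μ1)] | σ(X)] = (ϑ1·e(X) + ϑ2·ẽ(X) + ϑ3·e(X)ẽ(X) + ϑ4·ẽ(X)²)·(τ̃(X)−τ(X)); in particular both conditional expectations vanish a.s. if and only if τ̃(X) = τ(X) a.s. (basic double robustness). -/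
open MeasureTheory ProbabilityTheory Filter Set

/-- The sub-σ-algebra σ(X) generated by a random element `X`. -/
abbrev sigmaAlg {Ω 𝒳 : Type*} [m𝒳 : MeasurableSpace 𝒳] (X : Ω → 𝒳) : MeasurableSpace Ω :=
  MeasurableSpace.comap X m𝒳

section Aux

variable {Ω : Type*} {mΩ : MeasurableSpace Ω} {μ : Measure Ω}

/-- Almost everywhere bounded. -/
def AEB (μ : Measure Ω) (f : Ω → ℝ) : Prop := ∃ C : ℝ, ∀ᵐ ω ∂μ, |f ω| ≤ C

lemma AEB.mul {f g : Ω → ℝ} (hf : AEB μ f) (hg : AEB μ g) :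
    AEB μ (fun ω => f ω * g ω) := by
  obtain ⟨C, hC⟩ := hf; obtain ⟨D, hD⟩ := hg
  refine ⟨|C| * |D|, ?_⟩
  filter_upwards [hC, hD] with ω h1 h2
  rw [abs_mul]
  exact mul_le_mul (h1.trans (le_abs_self C)) (h2.trans (le_abs_self D)) (abs_nonneg _)
    (abs_nonneg _)

lemma AEB.add {f g : Ω → ℝ} (hf : AEB μ f) (hg : AEB μ g) :
    AEB μ (fun ω => f ω + g ω) := by
  obtain ⟨C, hC⟩ := hf; obtain ⟨D, hD⟩ := hg
  refine ⟨C + D, ?_⟩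
  filter_upwards [hC, hD] with ω h1 h2
  exact (abs_add_le _ _).trans (add_le_add h1 h2)

lemma AEB.sub {f g : Ω → ℝ} (hf : AEB μ f) (hg : AEB μ g) :
    AEB μ (fun ω => f ω - g ω) := by
  obtain ⟨C, hC⟩ := hf; obtain ⟨D, hD⟩ := hg
  refine ⟨C + D, ?_⟩
  filter_upwards [hC, hD] with ω h1 h2
  exact (abs_sub _ _).trans (add_le_add h1 h2)

lemma AEB.neg {f : Ω → ℝ} (hf : AEB μ f) : AEB μ (fun ω => -f ω) := by
  obtain ⟨C, hC⟩ := hf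
  exact ⟨C, by filter_upwards [hC] with ω h; simpa using h⟩

lemma AEB.const (c : ℝ) : AEB μ (fun _ => c) := ⟨|c|, Filter.Eventually.of_forall fun _ => le_rfl⟩

lemma AEB.integrable [IsFiniteMeasure μ] {f : Ω → ℝ} (hm : AEStronglyMeasurable f μ)
    (hf : AEB μ f) : Integrable f μ := by
  obtain ⟨C, hC⟩ := hf
  refine ⟨hm, HasFiniteIntegral.of_bounded (C := C) ?_⟩
  filter_upwards [hC] with ω h
  simpa [Real.norm_eq_abs] using h

lemma integrable_of_abs_le [IsFiniteMeasure μ] {f : Ω → ℝ} (hm : AEStronglyMeasurable f μ)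
    (C : ℝ) (hf : ∀ ω, |f ω| ≤ C) : Integrable f μ :=
  AEB.integrable hm ⟨C, Filter.Eventually.of_forall hf⟩

end Aux

/-- Conditional expectation of a product of conditionally independent bounded random
variables factorizes. -/
lemma condexp_mul_of_condIndepFun {Ω : Type*} {m' : MeasurableSpace Ω}
    {mΩ : MeasurableSpace Ω} [StandardBorelSpace Ω]
    (hm' : m' ≤ mΩ) {μ : Measure Ω} [IsProbabilityMeasure μ]
    {f g : Ω → ℝ} (hf : Measurable f) (hg : Measurable g)
    (Cf Cg : ℝ) (hfb : ∀ ω, |f ω| ≤ Cf) (hgb : ∀ ω, |g ω| ≤ Cg)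
    (h : CondIndepFun m' hm' f g μ) :
    μ[fun ω => f ω * g ω|m'] =ᵐ[μ] fun ω => (μ[f|m']) ω * (μ[g|m']) ω := by
  have hgen : (inferInstance : MeasurableSpace ℝ)
      = MeasurableSpace.generateFrom (⋃ q : ℚ, {Iic (q : ℝ)}) := by
    rw [← Real.borel_eq_generateFrom_Iic_rat]
    exact BorelSpace.measurable_eq
  have hpiS : IsPiSystem (⋃ q : ℚ, {Iic (q : ℝ)}) := by
    rintro s hs t ht -
    simp only [mem_iUnion, mem_singleton_iff] at hs ht ⊢
    obtain ⟨q, rfl⟩ := hs; obtain ⟨r, rfl⟩ := ht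
    refine ⟨min q r, ?_⟩
    rw [Iic_inter_Iic]
    norm_cast
  -- pointwise a.e. independence under the conditional kernel
  have hq : ∀ q r : ℚ, ∀ᵐ ω ∂μ,
      condExpKernel μ m' ω (f ⁻¹' Iic (q : ℝ) ∩ g ⁻¹' Iic (r : ℝ))
        = condExpKernel μ m' ω (f ⁻¹' Iic (q : ℝ)) * condExpKernel μ m' ω (g ⁻¹' Iic (r : ℝ)) :=
    fun q r => ae_of_ae_trim hm'
      (h _ _ ⟨Iic (q : ℝ), measurableSet_Iic, rfl⟩ ⟨Iic (r : ℝ), measurableSet_Iic, rfl⟩)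
  have hall : ∀ᵐ ω ∂μ, ∀ q r : ℚ,
      condExpKernel μ m' ω (f ⁻¹' Iic (q : ℝ) ∩ g ⁻¹' Iic (r : ℝ))
        = condExpKernel μ m' ω (f ⁻¹' Iic (q : ℝ)) * condExpKernel μ m' ω (g ⁻¹' Iic (r : ℝ)) := by
    rw [ae_all_iff]; intro q; rw [ae_all_iff]; intro r; exact hq q r
  have hae : ∀ᵐ ω ∂μ, ProbabilityTheory.IndepFun f g (condExpKernel μ m' ω) := by
    filter_upwards [hall] with ω hω
    have hco : ∀ h : Ω → ℝ, MeasurableSpace.comap h (inferInstance : MeasurableSpace ℝ)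
        = MeasurableSpace.generateFrom ((fun t => h ⁻¹' t) '' (⋃ q : ℚ, {Iic (q : ℝ)})) := by
      intro h
      conv_lhs => rw [hgen]
      rw [MeasurableSpace.comap_generateFrom]
    refine ProbabilityTheory.IndepSets.indep hf.comap_le hg.comap_le
      (hpiS.comap f) (hpiS.comap g) (hco f) (hco g) ?_
    rintro t1 t2 ⟨s1, hs1, rfl⟩ ⟨s2, hs2, rfl⟩
    simp only [mem_iUnion, mem_singleton_iff] at hs1 hs2
    obtain ⟨q, rfl⟩ := hs1; obtain ⟨r, rfl⟩ := hs2
    simp only [ProbabilityTheory.Kernel.const_apply, MeasureTheory.ae_dirac_eq,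
      Filter.eventually_pure]
    exact hω q r
  have hif : Integrable f μ := integrable_of_abs_le hf.aestronglyMeasurable Cf hfb
  have hig : Integrable g μ := integrable_of_abs_le hg.aestronglyMeasurable Cg hgb
  have hifg : Integrable (fun ω => f ω * g ω) μ := by
    refine integrable_of_abs_le (hf.mul hg).aestronglyMeasurable (|Cf| * |Cg|) fun ω => ?_
    rw [abs_mul]
    exact mul_le_mul ((hfb ω).trans (le_abs_self Cf)) ((hgb ω).trans (le_abs_self Cg))
      (abs_nonneg _) (abs_nonneg _)
  have h1 := condExp_ae_eq_integral_condExpKernel hm' hifg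
  have h2 := condExp_ae_eq_integral_condExpKernel hm' hif
  have h3 := condExp_ae_eq_integral_condExpKernel hm' hig
  filter_upwards [h1, h2, h3, hae] with ω e1 e2 e3 hind
  rw [e1, e2, e3]
  exact ProbabilityTheory.IndepFun.integral_fun_mul_eq_mul_integral hind hf.aestronglyMeasurable hg.aestronglyMeasurable

section Aux2

variable {Ω 𝒳 : Type*} {mΩ : MeasurableSpace Ω} [MeasurableSpace 𝒳]
  {μ : Measure Ω} [IsProbabilityMeasure μ] {X : Ω → 𝒳}

/-- Pull-out property for σ(X)-measurable factors. -/
lemma condexp_pullout (hX : Measurable X) {g : 𝒳 → ℝ} (hg : Measurable g)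
    {Z : Ω → ℝ} {z : 𝒳 → ℝ} (iZ : Integrable Z μ)
    (igZ : Integrable (fun ω => g (X ω) * Z ω) μ)
    (hc : μ[Z|sigmaAlg X] =ᵐ[μ] fun ω => z (X ω)) :
    μ[fun ω => g (X ω) * Z ω|sigmaAlg X] =ᵐ[μ] fun ω => g (X ω) * z (X ω) := by
  have hsm : StronglyMeasurable[sigmaAlg X] fun ω => g (X ω) :=
    (hg.comp (measurable_iff_comap_le.mpr le_rfl)).stronglyMeasurable
  have heq : (fun ω => g (X ω) * Z ω) = (fun ω => g (X ω)) * Z := rfl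
  rw [heq]
  refine (condExp_mul_of_stronglyMeasurable_left hsm (heq ▸ igZ) iZ).trans ?_
  filter_upwards [hc] with ω h
  simp only [Pi.mul_apply]
  rw [h]

/-- Conditional expectation of a linear combination with σ(X)-measurable coefficients. -/
lemma condexp_comb (hX : Measurable X)
    {Z1 Z2 Z3 Z4 : Ω → ℝ} {z1 z2 z3 z4 g1 g2 g3 g4 g5 : 𝒳 → ℝ}
    (hg1 : Measurable g1) (hg2 : Measurable g2) (hg3 : Measurable g3) (hg4 : Measurable g4)
    (hg5 : Measurable g5)
    (iZ1 : Integrable Z1 μ) (iZ2 : Integrable Z2 μ) (iZ3 : Integrable Z3 μ)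
    (iZ4 : Integrable Z4 μ)
    (i1 : Integrable (fun ω => g1 (X ω) * Z1 ω) μ)
    (i2 : Integrable (fun ω => g2 (X ω) * Z2 ω) μ)
    (i3 : Integrable (fun ω => g3 (X ω) * Z3 ω) μ)
    (i4 : Integrable (fun ω => g4 (X ω) * Z4 ω) μ)
    (i5 : Integrable (fun ω => g5 (X ω)) μ)
    (hc1 : μ[Z1|sigmaAlg X] =ᵐ[μ] fun ω => z1 (X ω))
    (hc2 : μ[Z2|sigmaAlg X] =ᵐ[μ] fun ω => z2 (X ω))
    (hc3 : μ[Z3|sigmaAlg X] =ᵐ[μ] fun ω => z3 (X ω))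
    (hc4 : μ[Z4|sigmaAlg X] =ᵐ[μ] fun ω => z4 (X ω)) :
    μ[fun ω => g1 (X ω) * Z1 ω + (g2 (X ω) * Z2 ω + (g3 (X ω) * Z3 ω
        + (g4 (X ω) * Z4 ω + g5 (X ω))))|sigmaAlg X]
      =ᵐ[μ] fun ω => g1 (X ω) * z1 (X ω) + (g2 (X ω) * z2 (X ω) + (g3 (X ω) * z3 (X ω)
        + (g4 (X ω) * z4 (X ω) + g5 (X ω)))) := by
  have hm' : sigmaAlg X ≤ mΩ := hX.comap_le
  have hsm5 : StronglyMeasurable[sigmaAlg X] fun ω => g5 (X ω) :=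
    (hg5.comp (measurable_iff_comap_le.mpr le_rfl)).stronglyMeasurable
  have pt1 := condexp_pullout hX hg1 iZ1 i1 hc1
  have pt2 := condexp_pullout hX hg2 iZ2 i2 hc2
  have pt3 := condexp_pullout hX hg3 iZ3 i3 hc3
  have pt4 := condexp_pullout hX hg4 iZ4 i4 hc4
  have h5 : μ[(fun ω => g5 (X ω))|sigmaAlg X] =ᵐ[μ] fun ω => g5 (X ω) := by
    rw [condExp_of_stronglyMeasurable hm' hsm5 i5]
  have hadd1 := condExp_add (m := sigmaAlg X) i1 (i2.add (i3.add (i4.add i5)))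
  have hadd2 := condExp_add (m := sigmaAlg X) i2 (i3.add (i4.add i5))
  have hadd3 := condExp_add (m := sigmaAlg X) i3 (i4.add i5)
  have hadd4 := condExp_add (m := sigmaAlg X) i4 i5
  exact hadd1.trans (pt1.add (hadd2.trans (pt2.add (hadd3.trans
    (pt3.add (hadd4.trans (pt4.add h5)))))))

end Aux2


/-- Core conditional-expectation computation for the GNPW residual. -/
lemma condexp_GNPW {Ω 𝒳 : Type*} {mΩ : MeasurableSpace Ω} [MeasurableSpace 𝒳]
    (P : Measure Ω) [IsProbabilityMeasure P] {X : Ω → 𝒳} (hX : Measurable X)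
    {W Y Y0 Y1 : Ω → ℝ} (hWm : Measurable W) (hWbin : ∀ ω, W ω = 0 ∨ W ω = 1)
    (hY0m : Measurable Y0) (hY1m : Measurable Y1)
    (bY0 : AEB P Y0) (bY1 : AEB P Y1)
    (hSUTVA : ∀ ω, Y ω = W ω * Y1 ω + (1 - W ω) * Y0 ω)
    {e μ0 μ1 : 𝒳 → ℝ}
    (hprop : P[W|sigmaAlg X] =ᵐ[P] fun ω => e (X ω))
    (hWY1 : P[fun ω => W ω * Y1 ω|sigmaAlg X] =ᵐ[P] fun ω => e (X ω) * μ1 (X ω))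
    (hWY0 : P[fun ω => W ω * Y0 ω|sigmaAlg X] =ᵐ[P] fun ω => e (X ω) * μ0 (X ω))
    (hY0c : P[Y0|sigmaAlg X] =ᵐ[P] fun ω => μ0 (X ω))
    (θ2 θ4 : ℝ) {ε β0 β1 τt : 𝒳 → ℝ}
    (hεm : Measurable ε) (hβ0m : Measurable β0) (hβ1m : Measurable β1) (hτm : Measurable τt)
    (bε : AEB P fun ω => ε (X ω)) (bβ0 : AEB P fun ω => β0 (X ω))
    (bβ1 : AEB P fun ω => β1 (X ω)) (bτ : AEB P fun ω => τt (X ω)) :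
    P[(fun ω => ((1 - θ2) * W ω + θ2 * ε (X ω) + (-1 - θ4) * W ω * ε (X ω)
          + θ4 * ε (X ω) ^ 2) * τt (X ω)
        - (W ω - ε (X ω)) * (Y ω - β0 (X ω) - (θ2 + θ4 * ε (X ω)) * (β1 (X ω) - β0 (X ω))))|sigmaAlg X]
      =ᵐ[P] fun ω =>
        (τt (X ω) * ((1 - θ2) + (-1 - θ4) * ε (X ω))
            + (β0 (X ω) + (θ2 + θ4 * ε (X ω)) * (β1 (X ω) - β0 (X ω)))) * e (X ω)
        + ((ε (X ω) - 1) * (e (X ω) * μ1 (X ω))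
        + ((- ε (X ω)) * (e (X ω) * μ0 (X ω))
        + (ε (X ω) * μ0 (X ω)
        + (τt (X ω) * (θ2 * ε (X ω) + θ4 * (ε (X ω) * ε (X ω)))
            - ε (X ω) * (β0 (X ω) + (θ2 + θ4 * ε (X ω)) * (β1 (X ω) - β0 (X ω))))))) := by
  have hW1 : ∀ ω, |W ω| ≤ 1 := fun ω => by rcases hWbin ω with h | h <;> simp [h]
  have bW : AEB P W := ⟨1, Filter.Eventually.of_forall hW1⟩
  -- coefficient functions
  have hg1m : Measurable fun x => τt x * ((1 - θ2) + (-1 - θ4) * ε x)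
      + (β0 x + (θ2 + θ4 * ε x) * (β1 x - β0 x)) := by fun_prop
  have hg2m : Measurable fun x => ε x - 1 := by fun_prop
  have hg3m : Measurable fun x => -ε x := by fun_prop
  have hg5m : Measurable fun x => τt x * (θ2 * ε x + θ4 * (ε x * ε x))
      - ε x * (β0 x + (θ2 + θ4 * ε x) * (β1 x - β0 x)) := by fun_prop
  -- boundedness of composed coefficients
  have bg1 : AEB P fun ω => τt (X ω) * ((1 - θ2) + (-1 - θ4) * ε (X ω))
      + (β0 (X ω) + (θ2 + θ4 * ε (X ω)) * (β1 (X ω) - β0 (X ω))) :=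
    (bτ.mul ((AEB.const _).add ((AEB.const _).mul bε))).add
      (bβ0.add (((AEB.const θ2).add ((AEB.const θ4).mul bε)).mul (bβ1.sub bβ0)))
  have bg2 : AEB P fun ω => ε (X ω) - 1 := bε.sub (AEB.const 1)
  have bg3 : AEB P fun ω => -ε (X ω) := bε.neg
  have bg5 : AEB P fun ω => τt (X ω) * (θ2 * ε (X ω) + θ4 * (ε (X ω) * ε (X ω)))
      - ε (X ω) * (β0 (X ω) + (θ2 + θ4 * ε (X ω)) * (β1 (X ω) - β0 (X ω))) :=
    (bτ.mul (((AEB.const θ2).mul bε).add ((AEB.const θ4).mul (bε.mul bε)))).sub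
      (bε.mul (bβ0.add (((AEB.const θ2).add ((AEB.const θ4).mul bε)).mul (bβ1.sub bβ0))))
  -- integrability
  have iW : Integrable W P := bW.integrable hWm.aestronglyMeasurable
  have iWY1 : Integrable (fun ω => W ω * Y1 ω) P :=
    (bW.mul bY1).integrable (hWm.mul hY1m).aestronglyMeasurable
  have iWY0 : Integrable (fun ω => W ω * Y0 ω) P :=
    (bW.mul bY0).integrable (hWm.mul hY0m).aestronglyMeasurable
  have iY0 : Integrable Y0 P := bY0.integrable hY0m.aestronglyMeasurable
  have i1 : Integrable (fun ω => (τt (X ω) * ((1 - θ2) + (-1 - θ4) * ε (X ω))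
      + (β0 (X ω) + (θ2 + θ4 * ε (X ω)) * (β1 (X ω) - β0 (X ω)))) * W ω) P :=
    (bg1.mul bW).integrable ((hg1m.comp hX).mul hWm).aestronglyMeasurable
  have i2 : Integrable (fun ω => (ε (X ω) - 1) * (W ω * Y1 ω)) P :=
    (bg2.mul (bW.mul bY1)).integrable
      ((hg2m.comp hX).mul (hWm.mul hY1m)).aestronglyMeasurable
  have i3 : Integrable (fun ω => (-ε (X ω)) * (W ω * Y0 ω)) P :=
    (bg3.mul (bW.mul bY0)).integrable
      ((hg3m.comp hX).mul (hWm.mul hY0m)).aestronglyMeasurable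
  have i4 : Integrable (fun ω => ε (X ω) * Y0 ω) P :=
    (bε.mul bY0).integrable ((hεm.comp hX).mul hY0m).aestronglyMeasurable
  have i5 : Integrable (fun ω => τt (X ω) * (θ2 * ε (X ω) + θ4 * (ε (X ω) * ε (X ω)))
      - ε (X ω) * (β0 (X ω) + (θ2 + θ4 * ε (X ω)) * (β1 (X ω) - β0 (X ω)))) P :=
    bg5.integrable (hg5m.comp hX).aestronglyMeasurable
  have hfun : (fun ω => ((1 - θ2) * W ω + θ2 * ε (X ω) + (-1 - θ4) * W ω * ε (X ω)
          + θ4 * ε (X ω) ^ 2) * τt (X ω)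
        - (W ω - ε (X ω)) * (Y ω - β0 (X ω) - (θ2 + θ4 * ε (X ω)) * (β1 (X ω) - β0 (X ω))))
      = fun ω =>
        (τt (X ω) * ((1 - θ2) + (-1 - θ4) * ε (X ω))
            + (β0 (X ω) + (θ2 + θ4 * ε (X ω)) * (β1 (X ω) - β0 (X ω)))) * W ω
        + ((ε (X ω) - 1) * (W ω * Y1 ω)
        + ((- ε (X ω)) * (W ω * Y0 ω)
        + (ε (X ω) * Y0 ω
        + (τt (X ω) * (θ2 * ε (X ω) + θ4 * (ε (X ω) * ε (X ω)))
            - ε (X ω) * (β0 (X ω) + (θ2 + θ4 * ε (X ω)) * (β1 (X ω) - β0 (X ω))))))) := by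
    funext ω
    rcases hWbin ω with h | h <;> rw [hSUTVA ω, h] <;> ring
  rw [hfun]
  exact condexp_comb (z1 := e) (z2 := fun x => e x * μ1 x) (z3 := fun x => e x * μ0 x)
    (z4 := μ0) hX hg1m hg2m hg3m hεm hg5m iW iWY1 iWY0 iY0 i1 i2 i3 i4 i5
    hprop hWY1 hWY0 hY0c

theorem stmt_8
    {Ω 𝒳 : Type*} [MeasurableSpace Ω] [StandardBorelSpace Ω] [MeasurableSpace 𝒳]
    (P : Measure Ω) [IsProbabilityMeasure P]
    (X : Ω → 𝒳) (hX : Measurable X)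
    (W : Ω → ℝ) (hWm : Measurable W) (hWbin : ∀ ω, W ω = 0 ∨ W ω = 1)
    (Y0 Y1 : Ω → ℝ) (hY0m : Measurable Y0) (hY1m : Measurable Y1)
    (CY : ℝ) (hYbdd : ∀ ω, |Y0 ω| ≤ CY ∧ |Y1 ω| ≤ CY)
    (Y : Ω → ℝ) (hSUTVA : ∀ ω, Y ω = W ω * Y1 ω + (1 - W ω) * Y0 ω)
    (hUnconf : CondIndepFun (sigmaAlg X) hX.comap_le W (fun ω => (Y0 ω, Y1 ω)) P)
    (e : 𝒳 → ℝ) (hem : Measurable e)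
    (hprop : P[W|sigmaAlg X] =ᵐ[P] (fun ω => e (X ω)))
    (hoverlap : ∀ᵐ ω ∂P, 0 < e (X ω) ∧ e (X ω) < 1)
    (μ0 μ1 : 𝒳 → ℝ) (hμ0m : Measurable μ0) (hμ1m : Measurable μ1)
    (Cμ : ℝ) (hμbdd : ∀ x, |μ0 x| ≤ Cμ ∧ |μ1 x| ≤ Cμ)
    (hμ0c : P[Y0|sigmaAlg X] =ᵐ[P] (fun ω => μ0 (X ω)))
    (hμ1c : P[Y1|sigmaAlg X] =ᵐ[P] (fun ω => μ1 (X ω)))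
    (θ1 θ2 θ3 θ4 : ℝ) (hθ12 : θ1 + θ2 = 1) (hθ34 : θ3 + θ4 = -1)
    (τt m0t m1t : 𝒳 → ℝ) (hτtm : Measurable τt) (hm0tm : Measurable m0t) (hm1tm : Measurable m1t)
    (Cτt : ℝ) (hτtb : ∀ x, |τt x| ≤ Cτt)
    (Cmt : ℝ) (hmtb : ∀ x, |m0t x| ≤ Cmt ∧ |m1t x| ≤ Cmt)
    (et : 𝒳 → ℝ) (hetm : Measurable et)
    (hetov : ∀ᵐ ω ∂P, 0 < et (X ω) ∧ et (X ω) < 1) :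
    (P[(fun ω => (θ1 * W ω + θ2 * e (X ω) + θ3 * W ω * e (X ω) + θ4 * e (X ω) ^ 2) * τt (X ω) - (W ω - e (X ω)) * (Y ω - m0t (X ω) - (θ2 + θ4 * e (X ω)) * (m1t (X ω) - m0t (X ω))))|sigmaAlg X]
      =ᵐ[P] (fun ω => e (X ω) * (1 - e (X ω)) * (τt (X ω) - (μ1 (X ω) - μ0 (X ω))))) ∧
    (P[(fun ω => (θ1 * W ω + θ2 * et (X ω) + θ3 * W ω * et (X ω) + θ4 * et (X ω) ^ 2) * τt (X ω) - (W ω - et (X ω)) * (Y ω - μ0 (X ω) - (θ2 + θ4 * et (X ω)) * (μ1 (X ω) - μ0 (X ω))))|sigmaAlg X]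
      =ᵐ[P] (fun ω => (θ1 * e (X ω) + θ2 * et (X ω) + θ3 * e (X ω) * et (X ω) + θ4 * et (X ω) ^ 2) *
        (τt (X ω) - (μ1 (X ω) - μ0 (X ω))))) ∧
    ((P[(fun ω => (θ1 * W ω + θ2 * e (X ω) + θ3 * W ω * e (X ω) + θ4 * e (X ω) ^ 2) * τt (X ω) - (W ω - e (X ω)) * (Y ω - m0t (X ω) - (θ2 + θ4 * e (X ω)) * (m1t (X ω) - m0t (X ω))))|sigmaAlg X] =ᵐ[P] 0 ∧
      P[(fun ω => (θ1 * W ω + θ2 * et (X ω) + θ3 * W ω * et (X ω) + θ4 * et (X ω) ^ 2) * τt (X ω) - (W ω - et (X ω)) * (Y ω - μ0 (X ω) - (θ2 + θ4 * et (X ω)) * (μ1 (X ω) - μ0 (X ω))))|sigmaAlg X] =ᵐ[P] 0) ↔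
      (∀ᵐ ω ∂P, τt (X ω) = μ1 (X ω) - μ0 (X ω))) := by
  obtain rfl : θ1 = 1 - θ2 := by linarith
  obtain rfl : θ3 = -1 - θ4 := by linarith
  have hW1 : ∀ ω, |W ω| ≤ 1 := fun ω => by rcases hWbin ω with h | h <;> simp [h]
  -- conditional expectations of W·Y1 and W·Y0 via conditional independence
  have hWY1 : P[fun ω => W ω * Y1 ω|sigmaAlg X] =ᵐ[P] fun ω => e (X ω) * μ1 (X ω) := by
    refine (condexp_mul_of_condIndepFun hX.comap_le hWm hY1m 1 CY hW1
      (fun ω => (hYbdd ω).2) (hUnconf.comp measurable_id measurable_snd)).trans ?_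
    filter_upwards [hprop, hμ1c] with ω a b
    rw [a, b]
  have hWY0 : P[fun ω => W ω * Y0 ω|sigmaAlg X] =ᵐ[P] fun ω => e (X ω) * μ0 (X ω) := by
    refine (condexp_mul_of_condIndepFun hX.comap_le hWm hY0m 1 CY hW1
      (fun ω => (hYbdd ω).1) (hUnconf.comp measurable_id measurable_fst)).trans ?_
    filter_upwards [hprop, hμ0c] with ω a b
    rw [a, b]
  -- boundedness facts
  have bY0 : AEB P Y0 := ⟨CY, Filter.Eventually.of_forall fun ω => (hYbdd ω).1⟩
  have bY1 : AEB P Y1 := ⟨CY, Filter.Eventually.of_forall fun ω => (hYbdd ω).2⟩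
  have bE : AEB P fun ω => e (X ω) := by
    refine ⟨1, ?_⟩
    filter_upwards [hoverlap] with ω h
    rw [abs_le]; constructor <;> linarith [h.1, h.2]
  have bEt : AEB P fun ω => et (X ω) := by
    refine ⟨1, ?_⟩
    filter_upwards [hetov] with ω h
    rw [abs_le]; constructor <;> linarith [h.1, h.2]
  have bτ : AEB P fun ω => τt (X ω) := ⟨Cτt, Filter.Eventually.of_forall fun ω => hτtb _⟩
  have bm0 : AEB P fun ω => m0t (X ω) := ⟨Cmt, Filter.Eventually.of_forall fun ω => (hmtb _).1⟩
  have bm1 : AEB P fun ω => m1t (X ω) := ⟨Cmt, Filter.Eventually.of_forall fun ω => (hmtb _).2⟩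
  have bμ0 : AEB P fun ω => μ0 (X ω) := ⟨Cμ, Filter.Eventually.of_forall fun ω => (hμbdd _).1⟩
  have bμ1 : AEB P fun ω => μ1 (X ω) := ⟨Cμ, Filter.Eventually.of_forall fun ω => (hμbdd _).2⟩
  -- the two main claims
  have K1 := condexp_GNPW P hX hWm hWbin hY0m hY1m bY0 bY1 hSUTVA hprop hWY1 hWY0 hμ0c
    θ2 θ4 hem hm0tm hm1tm hτtm bE bm0 bm1 bτ
  have K2 := condexp_GNPW P hX hWm hWbin hY0m hY1m bY0 bY1 hSUTVA hprop hWY1 hWY0 hμ0c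
    θ2 θ4 hetm hμ0m hμ1m hτtm bEt bμ0 bμ1 bτ
  have part1 : P[(fun ω => ((1 - θ2) * W ω + θ2 * e (X ω) + (-1 - θ4) * W ω * e (X ω)
        + θ4 * e (X ω) ^ 2) * τt (X ω)
      - (W ω - e (X ω)) * (Y ω - m0t (X ω) - (θ2 + θ4 * e (X ω)) * (m1t (X ω) - m0t (X ω))))|sigmaAlg X]
      =ᵐ[P] fun ω => e (X ω) * (1 - e (X ω)) * (τt (X ω) - (μ1 (X ω) - μ0 (X ω))) := by
    refine K1.trans ?_
    refine Filter.Eventually.of_forall fun ω => ?_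
    ring
  have part2 : P[(fun ω => ((1 - θ2) * W ω + θ2 * et (X ω) + (-1 - θ4) * W ω * et (X ω)
        + θ4 * et (X ω) ^ 2) * τt (X ω)
      - (W ω - et (X ω)) * (Y ω - μ0 (X ω) - (θ2 + θ4 * et (X ω)) * (μ1 (X ω) - μ0 (X ω))))|sigmaAlg X]
      =ᵐ[P] fun ω => ((1 - θ2) * e (X ω) + θ2 * et (X ω) + (-1 - θ4) * e (X ω) * et (X ω)
        + θ4 * et (X ω) ^ 2) * (τt (X ω) - (μ1 (X ω) - μ0 (X ω))) := by
    refine K2.trans ?_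
    refine Filter.Eventually.of_forall fun ω => ?_
    ring
  refine ⟨part1, part2, ?_, ?_⟩
  · rintro ⟨hz1, -⟩
    have hzz := part1.symm.trans hz1
    filter_upwards [hzz, hoverlap] with ω h1 h2
    simp only [Pi.zero_apply] at h1
    have hne : e (X ω) * (1 - e (X ω)) ≠ 0 :=
      mul_ne_zero (ne_of_gt h2.1) (ne_of_gt (by linarith [h2.2]))
    exact sub_eq_zero.mp ((mul_eq_zero.mp h1).resolve_left hne)
  · intro ht
    constructor
    · refine part1.trans ?_
      filter_upwards [ht] with ω h
      simp [h]
    · refine part2.trans ?_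
      filter_upwards [ht] with ω h
      simp [h]
end

section
/- Define the weighted AIPW residual Ψ[τ̃, ẽ, (μ̃0,μ̃1)] = ẽ(X)(1−ẽ(X))·τ̃(X) − ẽ(X)(1−ẽ(X))·(μ̃1(X)−μ̃0(X)) − (W−ẽ(X))·(Y − W·μ̃1(X) − (1−W)·μ̃0(X)) for bounded measurable candidates τ̃, μ̃0, μ̃1 and measurable ẽ with 0 < ẽ(X) < 1 a.s. Then, almost surely: (i) E[Ψ[τ̃, e, (μ̃0,μ̃1)] | σ(X)] = e(X)(1−e(X))·(τ̃(X)−τ(X)) and E[Ψ[τ̃, ẽ, (μ0,μ1)] | σ(X)] = ẽ(X)(1−ẽ(X))·(τ̃(X)−τ(X)), so both vanish a.s. iff τ̃(X) = τ(X) a.s. (double robustness); and (ii) Neyman orthogonality holds: for bounded measurable directions (h_e, h_{μ0}, h_{μ1}) on 𝒳, for almost every ω the function t ↦ E[Ψ[τ, e+t·h_e, (μ0+t·h_{μ0}, μ1+t·h_{μ1})] | σ(X)](ω) equals t²[(e−1)·h_e·h_{μ1} − e·h_e·h_{μ0}] + t³·h_e²(h_{μ1}−h_{μ0}) evaluated at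 X(ω), hence has derivative 0 at t = 0. -/
open MeasureTheory ProbabilityTheory Filter Set


lemma integrable_of_ae_bdd {α : Type*} {mα : MeasurableSpace α} (μ : Measure α)
    [IsFiniteMeasure μ] {f : α → ℝ} (hf : AEStronglyMeasurable f μ) {C : ℝ}
    (hb : ∀ᵐ ω ∂μ, |f ω| ≤ C) : Integrable f μ :=
  Integrable.mono' (integrable_const C) hf
    (by filter_upwards [hb] with ω h; simpa [Real.norm_eq_abs] using h)

/-- key integral identity used twice -/
lemma integral_mul_indicator_eq {Ω : Type*} {m' : MeasurableSpace Ω} [mΩ : MeasurableSpace Ω]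
    (P : Measure Ω) [IsProbabilityMeasure P]
    (b : Ω → ℝ) (c : ℝ) (hbb : ∀ᵐ ω ∂P, ‖b ω‖ ≤ c)
    {D : Set Ω} (hD : MeasurableSet D)
    (hm' : m' ≤ mΩ) (hb : StronglyMeasurable[m'] b) :
    ∫ ω, b ω * D.indicator (fun _ => (1:ℝ)) ω ∂P
      = ∫ ω, b ω * (P[D.indicator (fun _ => (1:ℝ))|m']) ω ∂P := by
  have hint : Integrable (D.indicator (fun _ => (1:ℝ))) P :=
    integrable_of_ae_bdd P (((measurable_const (a := (1:ℝ))).indicator hD).aestronglyMeasurable)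
      (C := 1) (ae_of_all _ fun ω => by by_cases h : ω ∈ D <;> simp [Set.indicator_apply, h])
  have hpull := condExp_stronglyMeasurable_mul_of_bound hm' hb hint c hbb
  calc ∫ ω, b ω * D.indicator (fun _ => (1:ℝ)) ω ∂P
      = ∫ ω, (P[fun ω => b ω * D.indicator (fun _ => (1:ℝ)) ω|m']) ω ∂P :=
        (integral_condExp hm').symm
    _ = ∫ ω, b ω * (P[D.indicator (fun _ => (1:ℝ))|m']) ω ∂P := by
        refine integral_congr_ae ?_
        filter_upwards [hpull] with ω h
        exact h

/-- Core identity: for `s ∈ m'`, integrating `1_s ⬝ E[1_{f⁻¹A}|m'] ⬝ v` equals integrating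
`1_s ⬝ 1_{f⁻¹A} ⬝ v`, when `v` is bounded and measurable w.r.t. `σ(g)` and `f, g` are
conditionally independent given `m'`. -/
lemma star_lemma {Ω β γ : Type*} {m' : MeasurableSpace Ω} [mΩ : MeasurableSpace Ω] [StandardBorelSpace Ω]
    (P : Measure Ω) [IsProbabilityMeasure P]
    {mβ : MeasurableSpace β} {mγ : MeasurableSpace γ}
    {f : Ω → β} {g : Ω → γ} (hf : Measurable f) (hg : Measurable g)
    {A : Set β} (hA : MeasurableSet A)
    {v : Ω → ℝ} {C : ℝ} (hvb : ∀ ω, |v ω| ≤ C)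
    {s : Set Ω}
    (hm' : m' ≤ mΩ)
    (hind : CondIndepFun m' hm' f g P)
    (hv : Measurable[mγ.comap g] v)
    (hs : MeasurableSet[m'] s) :
    ∫ ω, (s.indicator (fun _ => (1:ℝ)) ω * (P[(f ⁻¹' A).indicator (fun _ => (1:ℝ))|m']) ω) * v ω ∂P
      = ∫ ω, (s.indicator (fun _ => (1:ℝ)) ω * (f ⁻¹' A).indicator (fun _ => (1:ℝ)) ω) * v ω ∂P := by
  have hm'' : MeasurableSpace.comap g mγ ≤ mΩ := hg.comap_le
  set u : Ω → ℝ := (f ⁻¹' A).indicator (fun _ => (1:ℝ)) with hu_def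
  have hSA : MeasurableSet[mΩ] (f ⁻¹' A) := hf hA
  have hsΩ : MeasurableSet[mΩ] s := hm' _ hs
  have hub : ∀ ω, |u ω| ≤ 1 := fun ω => by
    by_cases h : ω ∈ f ⁻¹' A <;> simp [hu_def, Set.indicator_apply, h]
  have h1s : ∀ ω, |s.indicator (fun _ => (1:ℝ)) ω| ≤ 1 := fun ω => by
    by_cases h : ω ∈ s <;> simp [Set.indicator_apply, h]
  have hcub : ∀ᵐ ω ∂P, |(P[u|m']) ω| ≤ 1 := by
    have h := ae_bdd_condExp_of_ae_bdd (m := m') (μ := P) (R := 1) (f := u)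
      (ae_of_all _ fun ω => by simpa using hub ω)
    simpa using h
  set b₁ : Ω → ℝ := fun ω => s.indicator (fun _ => (1:ℝ)) ω * (P[u|m']) ω with hb₁_def
  set b₂ : Ω → ℝ := fun ω => s.indicator (fun _ => (1:ℝ)) ω * u ω with hb₂_def
  have hb₁sm : StronglyMeasurable[m'] b₁ := by
    exact (stronglyMeasurable_const.indicator hs).mul stronglyMeasurable_condExp
  have hb₁m : AEStronglyMeasurable b₁ P := (hb₁sm.mono hm').aestronglyMeasurable
  have hb₂meas : Measurable[mΩ] b₂ := by
    exact (measurable_const.indicator hsΩ).mul (measurable_const.indicator hSA)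
  have hb₂m : AEStronglyMeasurable b₂ P := hb₂meas.aestronglyMeasurable
  have hb₁b : ∀ᵐ ω ∂P, |b₁ ω| ≤ 1 := by
    filter_upwards [hcub] with ω h
    rw [hb₁_def, abs_mul]
    exact mul_le_one₀ (h1s ω) (abs_nonneg _) h
  have hb₂b : ∀ᵐ ω ∂P, |b₂ ω| ≤ 1 :=
    ae_of_all _ fun ω => by
      rw [hb₂_def, abs_mul]
      exact mul_le_one₀ (h1s ω) (abs_nonneg _) (hub ω)
  -- core identity for indicators of sets in σ(g)
  have core : ∀ t : Set γ, MeasurableSet t →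
      ∫ ω, b₁ ω * (g ⁻¹' t).indicator (fun _ => (1:ℝ)) ω ∂P
        = ∫ ω, b₂ ω * (g ⁻¹' t).indicator (fun _ => (1:ℝ)) ω ∂P := by
    intro t ht
    have hBt : MeasurableSet[mΩ] (g ⁻¹' t) := hg ht
    have h1 := integral_mul_indicator_eq (mΩ := mΩ) P b₁ 1
      (by filter_upwards [hb₁b] with ω h; simpa [Real.norm_eq_abs] using h) hBt hm' hb₁sm
    have h2 := integral_mul_indicator_eq (mΩ := mΩ) P (s.indicator (fun _ => (1:ℝ))) 1
      (ae_of_all _ fun ω => by simpa [Real.norm_eq_abs] using h1s ω) (hSA.inter hBt) hm'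
      (by exact stronglyMeasurable_const.indicator hs : StronglyMeasurable[m'] (s.indicator (fun _ => (1:ℝ))))
    have hfac := (condIndepFun_iff_condExp_inter_preimage_eq_mul (m' := m') (hm' := hm')
      hf hg).mp hind A t hA ht
    have hptw : ∀ ω, u ω * (g ⁻¹' t).indicator (fun _ => (1:ℝ)) ω
        = (f ⁻¹' A ∩ g ⁻¹' t).indicator (fun _ => (1:ℝ)) ω := fun ω => by
      by_cases h1 : ω ∈ f ⁻¹' A <;> by_cases h2 : ω ∈ g ⁻¹' t <;>
        simp [hu_def, Set.indicator_apply, h1, h2]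
    calc ∫ ω, b₁ ω * (g ⁻¹' t).indicator (fun _ => (1:ℝ)) ω ∂P
        = ∫ ω, b₁ ω * (P[(g ⁻¹' t).indicator (fun _ => (1:ℝ))|m']) ω ∂P := h1
      _ = ∫ ω, s.indicator (fun _ => (1:ℝ)) ω
            * (P[(f ⁻¹' A ∩ g ⁻¹' t).indicator (fun _ => (1:ℝ))|m']) ω ∂P := by
          refine integral_congr_ae ?_
          filter_upwards [hfac] with ω h
          rw [hb₁_def]
          simp only []
          rw [mul_assoc]
          congr 1
          exact h.symm
      _ = ∫ ω, s.indicator (fun _ => (1:ℝ)) ω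
            * (f ⁻¹' A ∩ g ⁻¹' t).indicator (fun _ => (1:ℝ)) ω ∂P := h2.symm
      _ = ∫ ω, b₂ ω * (g ⁻¹' t).indicator (fun _ => (1:ℝ)) ω ∂P := by
          refine integral_congr_ae (ae_of_all _ fun ω => ?_)
          rw [hb₂_def]
          simp only []
          rw [mul_assoc, hptw ω]
  -- induction over integrable functions w.r.t. the trimmed measure
  have key : ∀ ⦃w : Ω → ℝ⦄, Integrable w (P.trim hm'') →
      ∫ ω, b₁ ω * w ω ∂P = ∫ ω, b₂ ω * w ω ∂P := by
    refine @Integrable.induction Ω ℝ (MeasurableSpace.comap g mγ) _ (P.trim hm'')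
      (fun w => ∫ ω, b₁ ω * w ω ∂P = ∫ ω, b₂ ω * w ω ∂P) ?_ ?_ ?_ ?_
    · intro c B hB _
      obtain ⟨t, ht, rfl⟩ := hB
      have hc : ∀ (b : Ω → ℝ), (fun ω => b ω * (g ⁻¹' t).indicator (fun _ => c) ω)
          = fun ω => c * (b ω * (g ⁻¹' t).indicator (fun _ => (1:ℝ)) ω) := fun b => by
        funext ω
        by_cases h : ω ∈ g ⁻¹' t <;> simp [Set.indicator_apply, h] <;> ring
      rw [hc b₁, hc b₂, integral_const_mul, integral_const_mul, core t ht]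
    · intro w1 w2 _ hw1 hw2 ih1 ih2
      have hw1P := integrable_of_integrable_trim hm'' hw1
      have hw2P := integrable_of_integrable_trim hm'' hw2
      have nb : ∀ (b : Ω → ℝ), AEStronglyMeasurable b P → (∀ᵐ ω ∂P, |b ω| ≤ 1) →
          ∀ (w : Ω → ℝ), Integrable w P → Integrable (fun ω => b ω * w ω) P :=
        fun b hbm hbb w hw => hw.bdd_mul hbm
          (by filter_upwards [hbb] with ω h; simpa [Real.norm_eq_abs] using h)
      have e1 : (fun ω => b₁ ω * (w1 + w2) ω)
          = fun ω => b₁ ω * w1 ω + b₁ ω * w2 ω := by funext ω; simp [Pi.add_apply]; ring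
      have e2 : (fun ω => b₂ ω * (w1 + w2) ω)
          = fun ω => b₂ ω * w1 ω + b₂ ω * w2 ω := by funext ω; simp [Pi.add_apply]; ring
      rw [e1, e2, integral_add (nb b₁ hb₁m hb₁b w1 hw1P) (nb b₁ hb₁m hb₁b w2 hw2P),
        integral_add (nb b₂ hb₂m hb₂b w1 hw1P) (nb b₂ hb₂m hb₂b w2 hw2P), ih1, ih2]
    · have cont : ∀ (b : Ω → ℝ), AEStronglyMeasurable b P → (∀ᵐ ω ∂P, |b ω| ≤ 1) →
          Continuous fun (w : Lp ℝ 1 (P.trim hm'')) => ∫ ω, b ω * w ω ∂P := by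
        intro b hbm hbb
        refine (LipschitzWith.of_dist_le_mul (K := 1) fun w1 w2 => ?_).continuous
        have hw1 : Integrable (⇑w1) (P.trim hm'') := L1.integrable_coeFn w1
        have hw2 : Integrable (⇑w2) (P.trim hm'') := L1.integrable_coeFn w2
        have hw1P := integrable_of_integrable_trim hm'' hw1
        have hw2P := integrable_of_integrable_trim hm'' hw2
        have hbb' : ∀ᵐ ω ∂P, ‖b ω‖ ≤ 1 := by
          filter_upwards [hbb] with ω h; simpa [Real.norm_eq_abs] using h
        have hb1 : Integrable (fun ω => b ω * w1 ω) P := hw1P.bdd_mul hbm hbb'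
        have hb2 : Integrable (fun ω => b ω * w2 ω) P := hw2P.bdd_mul hbm hbb'
        rw [NNReal.coe_one, one_mul, Real.dist_eq, ← integral_sub hb1 hb2]
        have hdm : AEStronglyMeasurable[MeasurableSpace.comap g mγ] (fun ω => ‖w1 ω - w2 ω‖) (P.trim hm'') :=
          ((Lp.aestronglyMeasurable w1).sub (Lp.aestronglyMeasurable w2)).norm
        calc |∫ ω, (b ω * w1 ω - b ω * w2 ω) ∂P|
            ≤ ∫ ω, |b ω * w1 ω - b ω * w2 ω| ∂P := by
              simpa [Real.norm_eq_abs] using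
                norm_integral_le_integral_norm (μ := P) (fun ω => b ω * w1 ω - b ω * w2 ω)
          _ ≤ ∫ ω, ‖w1 ω - w2 ω‖ ∂P := by
              refine integral_mono_ae (hb1.sub hb2).abs (hw1P.sub hw2P).norm ?_
              filter_upwards [hbb] with ω h
              rw [← mul_sub, abs_mul, Real.norm_eq_abs]
              exact mul_le_of_le_one_left (abs_nonneg _) h
          _ = ∫ ω, ‖w1 ω - w2 ω‖ ∂(P.trim hm'') := integral_trim_ae hm'' hdm
          _ = dist w1 w2 := by
              rw [L1.dist_eq_integral_dist w1 w2]
              exact integral_congr_ae (ae_of_all _ fun ω => by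
                simp [Real.dist_eq, Real.norm_eq_abs])
      exact isClosed_eq (cont b₁ hb₁m hb₁b) (cont b₂ hb₂m hb₂b)
    · intro w1 w2 hae _ ih
      have haeP : w1 =ᵐ[P] w2 := ae_eq_of_ae_eq_trim hae
      calc ∫ ω, b₁ ω * w2 ω ∂P = ∫ ω, b₁ ω * w1 ω ∂P :=
            integral_congr_ae (by filter_upwards [haeP] with ω h; rw [h])
        _ = ∫ ω, b₂ ω * w1 ω ∂P := ih
        _ = ∫ ω, b₂ ω * w2 ω ∂P :=
            integral_congr_ae (by filter_upwards [haeP] with ω h; rw [h])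
  have hvTrim : Integrable v (P.trim hm'') :=
    integrable_of_ae_bdd _ hv.stronglyMeasurable.aestronglyMeasurable (ae_of_all _ hvb)
  exact key hvTrim

/-- conditional independence gives factorization of conditional expectations -/
lemma condexp_indicator_mul {Ω β γ : Type*} {m' : MeasurableSpace Ω} [mΩ : MeasurableSpace Ω] [StandardBorelSpace Ω]
    (P : Measure Ω) [IsProbabilityMeasure P]
    {mβ : MeasurableSpace β} {mγ : MeasurableSpace γ}
    {f : Ω → β} {g : Ω → γ} (hf : Measurable f) (hg : Measurable g)
    {A : Set β} (hA : MeasurableSet A)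
    {v : Ω → ℝ} {C : ℝ} (hvb : ∀ ω, |v ω| ≤ C) (hvm : Measurable v)
    (hm' : m' ≤ mΩ)
    (hind : CondIndepFun m' hm' f g P)
    (hv : Measurable[mγ.comap g] v) :
    P[fun ω => (f ⁻¹' A).indicator (fun _ => (1:ℝ)) ω * v ω|m'] =ᵐ[P]
      fun ω => (P[(f ⁻¹' A).indicator (fun _ => (1:ℝ))|m']) ω * (P[v|m']) ω := by
  have hm'' : MeasurableSpace.comap g mγ ≤ mΩ := hg.comap_le
  set u : Ω → ℝ := (f ⁻¹' A).indicator (fun _ => (1:ℝ)) with hu_def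
  have hum : Measurable[mΩ] u := by exact measurable_const.indicator (hf hA)
  have hub : ∀ ω, |u ω| ≤ 1 := fun ω => by
    by_cases h : ω ∈ f ⁻¹' A <;> simp [hu_def, Set.indicator_apply, h]
  have hcub : ∀ᵐ ω ∂P, ‖(P[u|m']) ω‖ ≤ 1 := by
    have h := ae_bdd_condExp_of_ae_bdd (m := m') (μ := P) (R := 1) (f := u)
      (ae_of_all _ fun ω => by simpa using hub ω)
    filter_upwards [h] with ω h'
    simpa [Real.norm_eq_abs] using h'
  have hvint : Integrable v P := integrable_of_ae_bdd P hvm.aestronglyMeasurable (ae_of_all _ hvb)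
  have huv : Integrable (fun ω => u ω * v ω) P :=
    hvint.bdd_mul hum.aestronglyMeasurable
      (ae_of_all _ fun ω => by simpa [Real.norm_eq_abs] using hub ω)
  have hcusm : AEStronglyMeasurable (P[u|m']) P :=
    (stronglyMeasurable_condExp.mono hm').aestronglyMeasurable
  refine (ae_eq_condExp_of_forall_setIntegral_eq hm' huv ?_ ?_ ?_).symm
  · intro s hs hfin
    exact (integrable_condExp.bdd_mul hcusm hcub).integrableOn
  · intro s hs hfin
    have hpull := condExp_stronglyMeasurable_mul_of_bound hm'
      (stronglyMeasurable_condExp (f := u)) hvint 1 hcub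
    have hsm : MeasurableSet[mΩ] s := hm' _ hs
    have hcuv : Integrable (fun ω => (P[u|m']) ω * v ω) P := hvint.bdd_mul hcusm hcub
    calc ∫ x in s, (P[u|m']) x * (P[v|m']) x ∂P
        = ∫ x in s, (P[fun ω => (P[u|m']) ω * v ω|m']) x ∂P := by
          refine integral_congr_ae (ae_restrict_of_ae ?_)
          filter_upwards [hpull] with ω h
          exact h.symm
      _ = ∫ x in s, (P[u|m']) x * v x ∂P := setIntegral_condExp hm' hcuv hs
      _ = ∫ ω, (s.indicator (fun _ => (1:ℝ)) ω * (P[u|m']) ω) * v ω ∂P := by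
          rw [← integral_indicator hsm]
          refine integral_congr_ae (ae_of_all _ fun ω => ?_)
          by_cases h : ω ∈ s <;> simp [Set.indicator_apply, h]
      _ = ∫ ω, (s.indicator (fun _ => (1:ℝ)) ω * u ω) * v ω ∂P :=
          star_lemma P hf hg hA hvb hm' hind hv hs
      _ = ∫ x in s, u x * v x ∂P := by
          rw [← integral_indicator hsm]
          refine integral_congr_ae (ae_of_all _ fun ω => ?_)
          by_cases h : ω ∈ s <;> simp [Set.indicator_apply, h]
  · exact (stronglyMeasurable_condExp.mul stronglyMeasurable_condExp).aestronglyMeasurable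


theorem stmt_9
    {Ω 𝒳 : Type*} [MeasurableSpace Ω] [StandardBorelSpace Ω] [MeasurableSpace 𝒳]
    (P : Measure Ω) [IsProbabilityMeasure P]
    (X : Ω → 𝒳) (hX : Measurable X)
    (W : Ω → ℝ) (hWm : Measurable W) (hWbin : ∀ ω, W ω = 0 ∨ W ω = 1)
    (Y0 Y1 : Ω → ℝ) (hY0m : Measurable Y0) (hY1m : Measurable Y1)
    (CY : ℝ) (hYbdd : ∀ ω, |Y0 ω| ≤ CY ∧ |Y1 ω| ≤ CY)
    (Y : Ω → ℝ) (hSUTVA : ∀ ω, Y ω = W ω * Y1 ω + (1 - W ω) * Y0 ω)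
    (hUnconf : CondIndepFun (sigmaAlg X) hX.comap_le W (fun ω => (Y0 ω, Y1 ω)) P)
    (e : 𝒳 → ℝ) (hem : Measurable e)
    (hprop : P[W|sigmaAlg X] =ᵐ[P] (fun ω => e (X ω)))
    (hoverlap : ∀ᵐ ω ∂P, 0 < e (X ω) ∧ e (X ω) < 1)
    (μ0 μ1 : 𝒳 → ℝ) (hμ0m : Measurable μ0) (hμ1m : Measurable μ1)
    (Cμ : ℝ) (hμbdd : ∀ x, |μ0 x| ≤ Cμ ∧ |μ1 x| ≤ Cμ)
    (hμ0c : P[Y0|sigmaAlg X] =ᵐ[P] (fun ω => μ0 (X ω)))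
    (hμ1c : P[Y1|sigmaAlg X] =ᵐ[P] (fun ω => μ1 (X ω)))
    (τt m0t m1t : 𝒳 → ℝ) (hτtm : Measurable τt) (hm0tm : Measurable m0t) (hm1tm : Measurable m1t)
    (Cτt : ℝ) (hτtb : ∀ x, |τt x| ≤ Cτt)
    (Cmt : ℝ) (hmtb : ∀ x, |m0t x| ≤ Cmt ∧ |m1t x| ≤ Cmt)
    (et : 𝒳 → ℝ) (hetm : Measurable et)
    (hetov : ∀ᵐ ω ∂P, 0 < et (X ω) ∧ et (X ω) < 1) :
    (P[(fun ω => e (X ω) * (1 - e (X ω)) * τt (X ω) - e (X ω) * (1 - e (X ω)) * (m1t (X ω) - m0t (X ω)) - (W ω - e (X ω)) * (Y ω - W ω * m1t (X ω) - (1 - W ω) * m0t (X ω)))|sigmaAlg X]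
      =ᵐ[P] (fun ω => e (X ω) * (1 - e (X ω)) * (τt (X ω) - (μ1 (X ω) - μ0 (X ω))))) ∧
    (P[(fun ω => et (X ω) * (1 - et (X ω)) * τt (X ω) - et (X ω) * (1 - et (X ω)) * (μ1 (X ω) - μ0 (X ω)) - (W ω - et (X ω)) * (Y ω - W ω * μ1 (X ω) - (1 - W ω) * μ0 (X ω)))|sigmaAlg X]
      =ᵐ[P] (fun ω => et (X ω) * (1 - et (X ω)) * (τt (X ω) - (μ1 (X ω) - μ0 (X ω))))) ∧
    ((P[(fun ω => e (X ω) * (1 - e (X ω)) * τt (X ω) - e (X ω) * (1 - e (X ω)) * (m1t (X ω) - m0t (X ω)) - (W ω - e (X ω)) * (Y ω - W ω * m1t (X ω) - (1 - W ω) * m0t (X ω)))|sigmaAlg X] =ᵐ[P] 0 ∧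
      P[(fun ω => et (X ω) * (1 - et (X ω)) * τt (X ω) - et (X ω) * (1 - et (X ω)) * (μ1 (X ω) - μ0 (X ω)) - (W ω - et (X ω)) * (Y ω - W ω * μ1 (X ω) - (1 - W ω) * μ0 (X ω)))|sigmaAlg X] =ᵐ[P] 0) ↔
      (∀ᵐ ω ∂P, τt (X ω) = μ1 (X ω) - μ0 (X ω))) ∧
    (∀ he h0 h1 : 𝒳 → ℝ, Measurable he → Measurable h0 → Measurable h1 →
      (∃ C : ℝ, ∀ x, |he x| ≤ C) → (∃ C : ℝ, ∀ x, |h0 x| ≤ C) → (∃ C : ℝ, ∀ x, |h1 x| ≤ C) →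
      (∀ t : ℝ,
        P[(fun ω => (e (X ω) + t * he (X ω)) * (1 - (e (X ω) + t * he (X ω))) * (μ1 (X ω) - μ0 (X ω)) - (e (X ω) + t * he (X ω)) * (1 - (e (X ω) + t * he (X ω))) * ((μ1 (X ω) + t * h1 (X ω)) - (μ0 (X ω) + t * h0 (X ω))) - (W ω - (e (X ω) + t * he (X ω))) * (Y ω - W ω * (μ1 (X ω) + t * h1 (X ω)) - (1 - W ω) * (μ0 (X ω) + t * h0 (X ω))))|sigmaAlg X]
          =ᵐ[P] (fun ω => t ^ 2 * ((e (X ω) - 1) * he (X ω) * h1 (X ω) - e (X ω) * he (X ω) * h0 (X ω)) + t ^ 3 * (he (X ω) ^ 2 * (h1 (X ω) - h0 (X ω))))) ∧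
      (∀ᵐ ω ∂P, HasDerivAt (fun t : ℝ => t ^ 2 * ((e (X ω) - 1) * he (X ω) * h1 (X ω) - e (X ω) * he (X ω) * h0 (X ω)) + t ^ 3 * (he (X ω) ^ 2 * (h1 (X ω) - h0 (X ω)))) 0 0)) := by
    classical
  have hm' : sigmaAlg X ≤ ‹MeasurableSpace Ω› := hX.comap_le
  have hXm : Measurable[sigmaAlg X] X := measurable_iff_comap_le.mpr le_rfl
  have tri : ∀ a b : ℝ, |a - b| ≤ |a| + |b| := fun a b => abs_sub a b
  have compSM : ∀ {ψ : 𝒳 → ℝ}, Measurable ψ → StronglyMeasurable[sigmaAlg X] (fun ω => ψ (X ω)) :=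
    fun hψ => (hψ.comp hXm).stronglyMeasurable
  have compInt : ∀ {ψ : 𝒳 → ℝ}, Measurable ψ → ∀ {c : ℝ}, (∀ᵐ ω ∂P, |ψ (X ω)| ≤ c) →
      Integrable (fun ω => ψ (X ω)) P :=
    fun hψ _ hb => integrable_of_ae_bdd P (hψ.comp hX).aestronglyMeasurable hb
  have hW1 : ∀ ω, |W ω| ≤ 1 := fun ω => by rcases hWbin ω with h | h <;> simp [h]
  have hWint : Integrable W P := integrable_of_ae_bdd P hWm.aestronglyMeasurable (ae_of_all _ hW1)
  have hY0int : Integrable Y0 P :=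
    integrable_of_ae_bdd P hY0m.aestronglyMeasurable (ae_of_all _ fun ω => (hYbdd ω).1)
  have hY1int : Integrable Y1 P :=
    integrable_of_ae_bdd P hY1m.aestronglyMeasurable (ae_of_all _ fun ω => (hYbdd ω).2)
  have hWn : ∀ᵐ ω ∂P, ‖W ω‖ ≤ 1 := ae_of_all _ fun ω => by
    simpa [Real.norm_eq_abs] using hW1 ω
  have hWY1int : Integrable (fun ω => W ω * Y1 ω) P :=
    hY1int.bdd_mul hWm.aestronglyMeasurable hWn
  have hWY0int : Integrable (fun ω => W ω * Y0 ω) P :=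
    hY0int.bdd_mul hWm.aestronglyMeasurable hWn
  have hWind : ∀ ω, (W ⁻¹' {1}).indicator (fun _ => (1:ℝ)) ω = W ω := by
    intro ω
    rcases hWbin ω with h | h
    · have hω : ω ∉ W ⁻¹' ({1} : Set ℝ) := by simp [Set.mem_preimage, h]
      simp [Set.indicator_apply, hω, h]
    · have hω : ω ∈ W ⁻¹' ({1} : Set ℝ) := by simp [Set.mem_preimage, h]
      simp [Set.indicator_apply, hω, h]
  have hpairm : Measurable (fun ω => (Y0 ω, Y1 ω)) := hY0m.prodMk hY1m
  have hcu : P[(W ⁻¹' {1}).indicator (fun _ => (1:ℝ))|sigmaAlg X] =ᵐ[P] fun ω => e (X ω) :=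
    (condExp_congr_ae (ae_of_all _ fun ω => hWind ω)).trans hprop
  have hprodY1 : P[fun ω => W ω * Y1 ω|sigmaAlg X] =ᵐ[P] fun ω => e (X ω) * μ1 (X ω) := by
    have hYc : Measurable[(Prod.instMeasurableSpace).comap (fun ω => (Y0 ω, Y1 ω))] Y1 :=
      measurable_snd.comp (measurable_iff_comap_le.mpr le_rfl)
    have h := condexp_indicator_mul P hWm hpairm (measurableSet_singleton (1:ℝ))
      (fun ω => (hYbdd ω).2) hY1m hm' hUnconf hYc
    have hl : (fun ω => (W ⁻¹' {1}).indicator (fun _ => (1:ℝ)) ω * Y1 ω)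
        = fun ω => W ω * Y1 ω := by
      funext ω
      rw [hWind ω]
    rw [hl] at h
    filter_upwards [h, hcu, hμ1c] with ω h1 h2 h3
    rw [h1, h2, h3]
  have hprodY0 : P[fun ω => W ω * Y0 ω|sigmaAlg X] =ᵐ[P] fun ω => e (X ω) * μ0 (X ω) := by
    have hYc : Measurable[(Prod.instMeasurableSpace).comap (fun ω => (Y0 ω, Y1 ω))] Y0 :=
      measurable_fst.comp (measurable_iff_comap_le.mpr le_rfl)
    have h := condexp_indicator_mul P hWm hpairm (measurableSet_singleton (1:ℝ))
      (fun ω => (hYbdd ω).1) hY0m hm' hUnconf hYc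
    have hl : (fun ω => (W ⁻¹' {1}).indicator (fun _ => (1:ℝ)) ω * Y0 ω)
        = fun ω => W ω * Y0 ω := by
      funext ω
      rw [hWind ω]
    rw [hl] at h
    filter_upwards [h, hcu, hμ0c] with ω h1 h2 h3
    rw [h1, h2, h3]
  -- pull-out lemma
  have pull : ∀ {b : 𝒳 → ℝ}, Measurable b → ∀ {c : ℝ}, (∀ᵐ ω ∂P, |b (X ω)| ≤ c) →
      ∀ {Z : Ω → ℝ}, Integrable Z P → ∀ {ζ : Ω → ℝ}, (P[Z|sigmaAlg X] =ᵐ[P] ζ) →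
      P[fun ω => b (X ω) * Z ω|sigmaAlg X] =ᵐ[P] fun ω => b (X ω) * ζ ω := by
    intro b hb c hc Z hZ ζ hζ
    have h := condExp_stronglyMeasurable_mul_of_bound hm' (compSM hb) hZ c
      (by filter_upwards [hc] with ω h; simpa [Real.norm_eq_abs] using h)
    filter_upwards [h, hζ] with ω h1 h2
    rw [← h2]
    exact h1
  -- the master computation
  have master : ∀ (b1 b2 b3 b4 b5 : 𝒳 → ℝ), Measurable b1 → Measurable b2 → Measurable b3 →
      Measurable b4 → Measurable b5 → ∀ (c : ℝ),
      (∀ᵐ ω ∂P, |b1 (X ω)| ≤ c ∧ |b2 (X ω)| ≤ c ∧ |b3 (X ω)| ≤ c ∧ |b4 (X ω)| ≤ c ∧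
        |b5 (X ω)| ≤ c) →
      P[fun ω => b1 (X ω) * (W ω * Y1 ω) + b2 (X ω) * W ω + b3 (X ω) * (W ω * Y0 ω)
          + b4 (X ω) * Y0 ω + b5 (X ω)|sigmaAlg X] =ᵐ[P]
        fun ω => b1 (X ω) * (e (X ω) * μ1 (X ω)) + b2 (X ω) * e (X ω)
          + b3 (X ω) * (e (X ω) * μ0 (X ω)) + b4 (X ω) * μ0 (X ω) + b5 (X ω) := by
    intro b1 b2 b3 b4 b5 hb1 hb2 hb3 hb4 hb5 c hc
    have hc1 : ∀ᵐ ω ∂P, |b1 (X ω)| ≤ c := by filter_upwards [hc] with ω h; exact h.1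
    have hc2 : ∀ᵐ ω ∂P, |b2 (X ω)| ≤ c := by filter_upwards [hc] with ω h; exact h.2.1
    have hc3 : ∀ᵐ ω ∂P, |b3 (X ω)| ≤ c := by filter_upwards [hc] with ω h; exact h.2.2.1
    have hc4 : ∀ᵐ ω ∂P, |b4 (X ω)| ≤ c := by filter_upwards [hc] with ω h; exact h.2.2.2.1
    have hc5 : ∀ᵐ ω ∂P, |b5 (X ω)| ≤ c := by filter_upwards [hc] with ω h; exact h.2.2.2.2
    have hnorm : ∀ {b : 𝒳 → ℝ}, (∀ᵐ ω ∂P, |b (X ω)| ≤ c) →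
        (∀ᵐ ω ∂P, ‖b (X ω)‖ ≤ c) := fun hb => by
      filter_upwards [hb] with ω h; simpa [Real.norm_eq_abs] using h
    set f1 : Ω → ℝ := fun ω => b1 (X ω) * (W ω * Y1 ω) with hf1
    set f2 : Ω → ℝ := fun ω => b2 (X ω) * W ω with hf2
    set f3 : Ω → ℝ := fun ω => b3 (X ω) * (W ω * Y0 ω) with hf3
    set f4 : Ω → ℝ := fun ω => b4 (X ω) * Y0 ω with hf4
    set f5 : Ω → ℝ := fun ω => b5 (X ω) with hf5
    have hif1 : Integrable f1 P :=
      hWY1int.bdd_mul (hb1.comp hX).aestronglyMeasurable (hnorm hc1)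
    have hif2 : Integrable f2 P :=
      hWint.bdd_mul (hb2.comp hX).aestronglyMeasurable (hnorm hc2)
    have hif3 : Integrable f3 P :=
      hWY0int.bdd_mul (hb3.comp hX).aestronglyMeasurable (hnorm hc3)
    have hif4 : Integrable f4 P :=
      hY0int.bdd_mul (hb4.comp hX).aestronglyMeasurable (hnorm hc4)
    have hif5 : Integrable f5 P := compInt hb5 hc5
    have p1 := pull hb1 hc1 hWY1int hprodY1
    have p2 := pull hb2 hc2 hWint hprop
    have p3 := pull hb3 hc3 hWY0int hprodY0
    have p4 := pull hb4 hc4 hY0int hμ0c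
    have p5 : P[f5|sigmaAlg X] =ᵐ[P] f5 := by
      rw [condExp_of_stronglyMeasurable hm' (compSM hb5) hif5]
    have h2 := condExp_add (μ := P) (m := sigmaAlg X) hif1 hif2
    have h3 := condExp_add (μ := P) (m := sigmaAlg X) (hif1.add hif2) hif3
    have h4 := condExp_add (μ := P) (m := sigmaAlg X) ((hif1.add hif2).add hif3) hif4
    have h5 := condExp_add (μ := P) (m := sigmaAlg X)
      (((hif1.add hif2).add hif3).add hif4) hif5
    have hfun : (fun ω => b1 (X ω) * (W ω * Y1 ω) + b2 (X ω) * W ω + b3 (X ω) * (W ω * Y0 ω)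
        + b4 (X ω) * Y0 ω + b5 (X ω)) = f1 + f2 + f3 + f4 + f5 := rfl
    rw [hfun]
    filter_upwards [h2, h3, h4, h5, p1, p2, p3, p4, p5] with ω q2 q3 q4 q5 r1 r2 r3 r4 r5
    simp only [Pi.add_apply] at q2 q3 q4 q5 ⊢
    rw [q5, q4, q3, q2, r1, r2, r3, r4, r5]
  -- a.e. bounds for the propensities
  have he1 : ∀ᵐ ω ∂P, |e (X ω)| ≤ 1 := by
    filter_upwards [hoverlap] with ω h
    rw [abs_le]; constructor <;> linarith [h.1, h.2]
  have het1 : ∀ᵐ ω ∂P, |et (X ω)| ≤ 1 := by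
    filter_upwards [hetov] with ω h
    rw [abs_le]; constructor <;> linarith [h.1, h.2]
  haveI : (ae P).NeBot := ae_neBot.mpr (IsProbabilityMeasure.ne_zero P)
  -- the main computation
  have main : ∀ (H ee g0 g1 : 𝒳 → ℝ), Measurable H → Measurable ee → Measurable g0 →
      Measurable g1 → ∀ (cH ce c0 c1 : ℝ), (∀ᵐ ω ∂P, |H (X ω)| ≤ cH) →
      (∀ᵐ ω ∂P, |ee (X ω)| ≤ ce) → (∀ x, |g0 x| ≤ c0) → (∀ x, |g1 x| ≤ c1) →
      P[fun ω => H (X ω) - (W ω - ee (X ω)) * (Y ω - W ω * g1 (X ω)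
          - (1 - W ω) * g0 (X ω))|sigmaAlg X] =ᵐ[P]
        fun ω => H (X ω) - ((1 - ee (X ω)) * (e (X ω) * (μ1 (X ω) - g1 (X ω)))
          - ee (X ω) * ((1 - e (X ω)) * (μ0 (X ω) - g0 (X ω)))) := by
    intro H ee g0 g1 hH hee hg0 hg1 cH ce c0 c1 hcH hce hc0 hc1
    obtain ⟨ω₀, hω₀H, hω₀e⟩ := (hcH.and hce).exists
    have hcH0 : 0 ≤ cH := le_trans (abs_nonneg _) hω₀H
    have hce0 : 0 ≤ ce := le_trans (abs_nonneg _) hω₀e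
    have hc00 : 0 ≤ c0 := le_trans (abs_nonneg _) (hc0 (X ω₀))
    have hc10 : 0 ≤ c1 := le_trans (abs_nonneg _) (hc1 (X ω₀))
    set c : ℝ := (1 + ce) * c1 + ce * c0 + (1 + ce) + ce + (cH + ce * c0) with hcdef
    have hcbnd : ∀ᵐ ω ∂P, |(fun x => -(1 - ee x)) (X ω)| ≤ c ∧
        |(fun x => (1 - ee x) * g1 x + ee x * g0 x) (X ω)| ≤ c ∧
        |(fun x => -ee x) (X ω)| ≤ c ∧ |ee (X ω)| ≤ c ∧
        |(fun x => H x - ee x * g0 x) (X ω)| ≤ c := by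
      filter_upwards [hcH, hce] with ω h1 h2
      have k1 : |1 - ee (X ω)| ≤ 1 + ce := (tri 1 (ee (X ω))).trans (by simp; linarith)
      have k2 : |(1 - ee (X ω)) * g1 (X ω)| ≤ (1 + ce) * c1 := by
        rw [abs_mul]
        exact mul_le_mul k1 (hc1 _) (abs_nonneg _) (by linarith)
      have k3 : |ee (X ω) * g0 (X ω)| ≤ ce * c0 := by
        rw [abs_mul]
        exact mul_le_mul h2 (hc0 _) (abs_nonneg _) hce0
      have nn1 : 0 ≤ (1 + ce) * c1 := mul_nonneg (by linarith) hc10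
      have nn2 : 0 ≤ ce * c0 := mul_nonneg hce0 hc00
      refine ⟨?_, ?_, ?_, ?_, ?_⟩
      · show |-(1 - ee (X ω))| ≤ c
        rw [abs_neg]
        linarith [k1]
      · show |(1 - ee (X ω)) * g1 (X ω) + ee (X ω) * g0 (X ω)| ≤ c
        refine (abs_add_le _ _).trans ?_
        linarith [k2, k3]
      · show |-ee (X ω)| ≤ c
        rw [abs_neg]
        linarith [h2]
      · linarith [h2]
      · show |H (X ω) - ee (X ω) * g0 (X ω)| ≤ c
        refine (tri _ _).trans ?_
        linarith [h1, k3]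
    have hmaster := master (fun x => -(1 - ee x))
      (fun x => (1 - ee x) * g1 x + ee x * g0 x) (fun x => -ee x) ee
      (fun x => H x - ee x * g0 x)
      (measurable_const.sub hee).neg
      (((measurable_const.sub hee).mul hg1).add (hee.mul hg0))
      hee.neg hee (hH.sub (hee.mul hg0)) c hcbnd
    refine (condExp_congr_ae (ae_of_all _ fun ω => ?_)).trans
      (hmaster.trans (ae_of_all _ fun ω => ?_))
    · show H (X ω) - (W ω - ee (X ω)) * (Y ω - W ω * g1 (X ω) - (1 - W ω) * g0 (X ω)) = _
      rcases hWbin ω with h | h <;> rw [hSUTVA ω, h] <;> ring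
    · show _ = H (X ω) - ((1 - ee (X ω)) * (e (X ω) * (μ1 (X ω) - g1 (X ω)))
        - ee (X ω) * ((1 - e (X ω)) * (μ0 (X ω) - g0 (X ω))))
      ring
  -- uniform bound helper for the σ(X)-measurable leading terms
  have hHbound : ∀ (ee' a b : 𝒳 → ℝ) (ca cb : ℝ),
      (∀ᵐ ω ∂P, 0 < ee' (X ω) ∧ ee' (X ω) < 1) → (∀ x, |a x| ≤ ca) → (∀ x, |b x| ≤ cb) →
      ∀ᵐ ω ∂P, |ee' (X ω) * (1 - ee' (X ω)) * a (X ω)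
        - ee' (X ω) * (1 - ee' (X ω)) * b (X ω)| ≤ ca + cb := by
    intro ee' a b ca cb hov ha hb
    filter_upwards [hov] with ω h
    have h1 : |ee' (X ω)| ≤ 1 := abs_le.mpr ⟨by linarith [h.1], by linarith [h.2]⟩
    have h2 : |1 - ee' (X ω)| ≤ 1 := abs_le.mpr ⟨by linarith [h.2], by linarith [h.1]⟩
    have hA : |ee' (X ω) * (1 - ee' (X ω))| ≤ 1 := by
      rw [abs_mul]
      exact mul_le_one₀ h1 (abs_nonneg _) h2
    have t1 : |ee' (X ω) * (1 - ee' (X ω)) * a (X ω)| ≤ ca := by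
      rw [abs_mul]
      calc |ee' (X ω) * (1 - ee' (X ω))| * |a (X ω)| ≤ 1 * ca :=
            mul_le_mul hA (ha _) (abs_nonneg _) one_pos.le
        _ = ca := one_mul _
    have t2 : |ee' (X ω) * (1 - ee' (X ω)) * b (X ω)| ≤ cb := by
      rw [abs_mul]
      calc |ee' (X ω) * (1 - ee' (X ω))| * |b (X ω)| ≤ 1 * cb :=
            mul_le_mul hA (hb _) (abs_nonneg _) one_pos.le
        _ = cb := one_mul _
    exact (tri _ _).trans (add_le_add t1 t2)
  -- Part 1
  have part1 : P[(fun ω => e (X ω) * (1 - e (X ω)) * τt (X ω)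
      - e (X ω) * (1 - e (X ω)) * (m1t (X ω) - m0t (X ω))
      - (W ω - e (X ω)) * (Y ω - W ω * m1t (X ω) - (1 - W ω) * m0t (X ω)))|sigmaAlg X]
      =ᵐ[P] (fun ω => e (X ω) * (1 - e (X ω)) * (τt (X ω) - (μ1 (X ω) - μ0 (X ω)))) := by
    have hHm : Measurable (fun x => e x * (1 - e x) * τt x
        - e x * (1 - e x) * (m1t x - m0t x)) :=
      ((hem.mul (measurable_const.sub hem)).mul hτtm).sub
        ((hem.mul (measurable_const.sub hem)).mul (hm1tm.sub hm0tm))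
    have hHb := hHbound e τt (fun x => m1t x - m0t x) Cτt (Cmt + Cmt) hoverlap hτtb
      (fun x => (tri _ _).trans (add_le_add (hmtb x).2 (hmtb x).1))
    refine (main (fun x => e x * (1 - e x) * τt x - e x * (1 - e x) * (m1t x - m0t x))
      e m0t m1t hHm hem hm0tm hm1tm (Cτt + (Cmt + Cmt)) 1 Cmt Cmt hHb he1
      (fun x => (hmtb x).1) (fun x => (hmtb x).2)).trans (ae_of_all _ fun ω => ?_)
    show e (X ω) * (1 - e (X ω)) * τt (X ω) - e (X ω) * (1 - e (X ω)) * (m1t (X ω) - m0t (X ω))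
        - ((1 - e (X ω)) * (e (X ω) * (μ1 (X ω) - m1t (X ω)))
          - e (X ω) * ((1 - e (X ω)) * (μ0 (X ω) - m0t (X ω))))
      = e (X ω) * (1 - e (X ω)) * (τt (X ω) - (μ1 (X ω) - μ0 (X ω)))
    ring
  -- Part 2
  have part2 : P[(fun ω => et (X ω) * (1 - et (X ω)) * τt (X ω)
      - et (X ω) * (1 - et (X ω)) * (μ1 (X ω) - μ0 (X ω))
      - (W ω - et (X ω)) * (Y ω - W ω * μ1 (X ω) - (1 - W ω) * μ0 (X ω)))|sigmaAlg X]
      =ᵐ[P] (fun ω => et (X ω) * (1 - et (X ω)) * (τt (X ω) - (μ1 (X ω) - μ0 (X ω)))) := by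
    have hHm : Measurable (fun x => et x * (1 - et x) * τt x
        - et x * (1 - et x) * (μ1 x - μ0 x)) :=
      ((hetm.mul (measurable_const.sub hetm)).mul hτtm).sub
        ((hetm.mul (measurable_const.sub hetm)).mul (hμ1m.sub hμ0m))
    have hHb := hHbound et τt (fun x => μ1 x - μ0 x) Cτt (Cμ + Cμ) hetov hτtb
      (fun x => (tri _ _).trans (add_le_add (hμbdd x).2 (hμbdd x).1))
    refine (main (fun x => et x * (1 - et x) * τt x - et x * (1 - et x) * (μ1 x - μ0 x))
      et μ0 μ1 hHm hetm hμ0m hμ1m (Cτt + (Cμ + Cμ)) 1 Cμ Cμ hHb het1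
      (fun x => (hμbdd x).1) (fun x => (hμbdd x).2)).trans (ae_of_all _ fun ω => ?_)
    show et (X ω) * (1 - et (X ω)) * τt (X ω) - et (X ω) * (1 - et (X ω)) * (μ1 (X ω) - μ0 (X ω))
        - ((1 - et (X ω)) * (e (X ω) * (μ1 (X ω) - μ1 (X ω)))
          - et (X ω) * ((1 - e (X ω)) * (μ0 (X ω) - μ0 (X ω))))
      = et (X ω) * (1 - et (X ω)) * (τt (X ω) - (μ1 (X ω) - μ0 (X ω)))
    ring
  refine ⟨part1, part2, ?_, ?_⟩
  · -- Part 3: double robustness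
    constructor
    · rintro ⟨-, hz2⟩
      filter_upwards [part2, hz2, hetov] with ω h1 h2 h3
      rw [h2] at h1
      have h0 : et (X ω) * (1 - et (X ω)) * (τt (X ω) - (μ1 (X ω) - μ0 (X ω))) = 0 := by
        simpa using h1.symm
      rcases mul_eq_zero.mp h0 with hq | hq
      · rcases mul_eq_zero.mp hq with hq' | hq' <;> [linarith [h3.1]; linarith [h3.2]]
      · have := sub_eq_zero.mp hq
        linarith
    · intro hτ
      constructor
      · refine part1.trans ?_
        filter_upwards [hτ] with ω h
        simp only [Pi.zero_apply]
        rw [h, sub_self, mul_zero]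
      · refine part2.trans ?_
        filter_upwards [hτ] with ω h
        simp only [Pi.zero_apply]
        rw [h, sub_self, mul_zero]
  · -- Part 4: Neyman orthogonality
    intro he h0 h1 hhe hh0 hh1 HCe HC0 HC1
    obtain ⟨Ce, hCe⟩ := HCe
    obtain ⟨C0, hC0⟩ := HC0
    obtain ⟨C1, hC1⟩ := HC1
    obtain ⟨ω₀, -⟩ := hoverlap.exists
    have hCe0 : 0 ≤ Ce := (abs_nonneg _).trans (hCe (X ω₀))
    have hC00 : 0 ≤ C0 := (abs_nonneg _).trans (hC0 (X ω₀))
    have hC10 : 0 ≤ C1 := (abs_nonneg _).trans (hC1 (X ω₀))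
    constructor
    · intro t
      have hBe0 : 0 ≤ 1 + |t| * Ce := by positivity
      have heem : Measurable (fun x => e x + t * he x) := hem.add (measurable_const.mul hhe)
      have heeb : ∀ᵐ ω ∂P, |e (X ω) + t * he (X ω)| ≤ 1 + |t| * Ce := by
        filter_upwards [hoverlap] with ω h
        refine (abs_add_le _ _).trans (add_le_add (abs_le.mpr ⟨by linarith [h.1], by linarith [h.2]⟩) ?_)
        rw [abs_mul]
        exact mul_le_mul_of_nonneg_left (hCe _) (abs_nonneg t)
      have hHm : Measurable (fun x => (e x + t * he x) * (1 - (e x + t * he x)) * (μ1 x - μ0 x)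
          - (e x + t * he x) * (1 - (e x + t * he x)) * ((μ1 x + t * h1 x) - (μ0 x + t * h0 x))) :=
        ((heem.mul (measurable_const.sub heem)).mul (hμ1m.sub hμ0m)).sub
          ((heem.mul (measurable_const.sub heem)).mul
            ((hμ1m.add (measurable_const.mul hh1)).sub (hμ0m.add (measurable_const.mul hh0))))
      have hHb : ∀ᵐ ω ∂P, |(e (X ω) + t * he (X ω)) * (1 - (e (X ω) + t * he (X ω)))
            * (μ1 (X ω) - μ0 (X ω))
          - (e (X ω) + t * he (X ω)) * (1 - (e (X ω) + t * he (X ω)))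
            * ((μ1 (X ω) + t * h1 (X ω)) - (μ0 (X ω) + t * h0 (X ω)))|
          ≤ (1 + |t| * Ce) * ((1 + (1 + |t| * Ce)) * (|t| * (C1 + C0))) := by
        filter_upwards [heeb] with ω hb1
        have hb2 : |1 - (e (X ω) + t * he (X ω))| ≤ 1 + (1 + |t| * Ce) :=
          (tri 1 _).trans (by rw [abs_one]; linarith)
        have hb3 : |t * (h1 (X ω) - h0 (X ω))| ≤ |t| * (C1 + C0) := by
          rw [abs_mul]
          exact mul_le_mul_of_nonneg_left
            ((tri _ _).trans (add_le_add (hC1 _) (hC0 _))) (abs_nonneg t)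
        have heq : (e (X ω) + t * he (X ω)) * (1 - (e (X ω) + t * he (X ω)))
              * (μ1 (X ω) - μ0 (X ω))
            - (e (X ω) + t * he (X ω)) * (1 - (e (X ω) + t * he (X ω)))
              * ((μ1 (X ω) + t * h1 (X ω)) - (μ0 (X ω) + t * h0 (X ω)))
            = -((e (X ω) + t * he (X ω)) * ((1 - (e (X ω) + t * he (X ω)))
              * (t * (h1 (X ω) - h0 (X ω))))) := by ring
        rw [heq, abs_neg, abs_mul, abs_mul]
        exact mul_le_mul hb1 (mul_le_mul hb2 hb3 (abs_nonneg _) (by linarith))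
          (mul_nonneg (abs_nonneg _) (abs_nonneg _)) hBe0
      refine (main (fun x => (e x + t * he x) * (1 - (e x + t * he x)) * (μ1 x - μ0 x)
          - (e x + t * he x) * (1 - (e x + t * he x)) * ((μ1 x + t * h1 x) - (μ0 x + t * h0 x)))
        (fun x => e x + t * he x) (fun x => μ0 x + t * h0 x) (fun x => μ1 x + t * h1 x)
        hHm heem (hμ0m.add (measurable_const.mul hh0)) (hμ1m.add (measurable_const.mul hh1))
        ((1 + |t| * Ce) * ((1 + (1 + |t| * Ce)) * (|t| * (C1 + C0)))) (1 + |t| * Ce)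
        (Cμ + |t| * C0) (Cμ + |t| * C1) hHb heeb
        (fun x => (abs_add_le _ _).trans (add_le_add (hμbdd x).1
          (by rw [abs_mul]; exact mul_le_mul_of_nonneg_left (hC0 x) (abs_nonneg t))))
        (fun x => (abs_add_le _ _).trans (add_le_add (hμbdd x).2
          (by rw [abs_mul]; exact mul_le_mul_of_nonneg_left (hC1 x) (abs_nonneg t))))).trans
        (ae_of_all _ fun ω => ?_)
      show (e (X ω) + t * he (X ω)) * (1 - (e (X ω) + t * he (X ω))) * (μ1 (X ω) - μ0 (X ω))
          - (e (X ω) + t * he (X ω)) * (1 - (e (X ω) + t * he (X ω)))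
            * ((μ1 (X ω) + t * h1 (X ω)) - (μ0 (X ω) + t * h0 (X ω)))
          - ((1 - (e (X ω) + t * he (X ω))) * (e (X ω) * (μ1 (X ω) - (μ1 (X ω) + t * h1 (X ω))))
            - (e (X ω) + t * he (X ω)) * ((1 - e (X ω)) * (μ0 (X ω) - (μ0 (X ω) + t * h0 (X ω)))))
        = t ^ 2 * ((e (X ω) - 1) * he (X ω) * h1 (X ω) - e (X ω) * he (X ω) * h0 (X ω))
          + t ^ 3 * (he (X ω) ^ 2 * (h1 (X ω) - h0 (X ω)))
      ring
    · refine ae_of_all _ fun ω => ?_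
      have h := ((hasDerivAt_pow 2 (0:ℝ)).mul_const
          ((e (X ω) - 1) * he (X ω) * h1 (X ω) - e (X ω) * he (X ω) * h0 (X ω))).add
        ((hasDerivAt_pow 3 (0:ℝ)).mul_const (he (X ω) ^ 2 * (h1 (X ω) - h0 (X ω))))
      simp at h
      exact h
end

section
/- Let r:𝒳→(0,1) be measurable with r(X)(1−r(X))/(e(X)(1−e(X))) ≤ M a.s. for some M > 0, and define the stabilized AIPW residual Ψ[τ̃, ẽ, (μ̃0,μ̃1)] = r(X)(1−r(X))·[τ̃(X) − (μ̃1(X)−μ̃0(X)) − (W−ẽ(X))·(Y − W·μ̃1(X) − (1−W)·μ̃0(X))/(ẽ(X)(1−ẽ(X)))] for bounded measurable candidates τ̃, μ̃0, μ̃1 and measurable ẽ with ẽ(X) bounded away from 0 and 1. Then, almost surely: (i) global double robustness holds: E[Ψ[τ̃, e, (μ̃0,μ̃1)] | σ(X)] = E[Ψ[τ̃, ẽ, (μ0,μ1)] | σ(X)] = r(X)(1−r(X))·(τ̃(X)−τ(X)), and these vanish a.s. iff τ̃(X) = τ(X) a.s.; and (ii) Neyman orthogonality holds: for bounded measurable directions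 (h_e, h_{μ0}, h_{μ1}) on 𝒳 such that e + t·h_e stays bounded inside (0,1) for t near 0, for almost every ω the function t ↦ E[Ψ[τ, e+t·h_e, (μ0+t·h_{μ0}, μ1+t·h_{μ1})] | σ(X)](ω) has derivative 0 at t = 0. -/
open MeasureTheory ProbabilityTheory Filter Set

section AuxiliaryLemmas
set_option linter.unusedSectionVars false
set_option linter.unusedVariables false
set_option maxHeartbeats 1000000

variable {Ω 𝒳 : Type*} [mΩ : MeasurableSpace Ω] [StandardBorelSpace Ω] [m𝒳 : MeasurableSpace 𝒳]
  {P : Measure Ω} [IsProbabilityMeasure P]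

lemma integrable_of_ae_bound {f : Ω → ℝ} (hf : AEStronglyMeasurable f P) {C : ℝ}
    (h : ∀ᵐ ω ∂P, |f ω| ≤ C) : Integrable f P :=
  Integrable.mono' (integrable_const C) hf (by simpa [Real.norm_eq_abs] using h)

lemma condExp_W_mul (X : Ω → 𝒳) (hX : Measurable X)
    (W : Ω → ℝ) (hWm : Measurable W) (hWbin : ∀ ω, W ω = 0 ∨ W ω = 1)
    (Y0 Y1 : Ω → ℝ) (hY0m : Measurable Y0) (hY1m : Measurable Y1)
    (hUnconf : CondIndepFun (sigmaAlg X) hX.comap_le W (fun ω => (Y0 ω, Y1 ω)) P)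
    (e : 𝒳 → ℝ) (hem : Measurable e)
    (hprop : P[W|sigmaAlg X] =ᵐ[P] (fun ω => e (X ω)))
    (hoverlap : ∀ᵐ ω ∂P, 0 < e (X ω) ∧ e (X ω) < 1)
    (Z : Ω → ℝ)
    (hZm : Measurable[sigmaAlg X ⊔ MeasurableSpace.comap (fun ω => (Y0 ω, Y1 ω)) inferInstance] Z)
    (CZ : ℝ) (hZb : ∀ᵐ ω ∂P, |Z ω| ≤ CZ) :
    P[fun ω => W ω * Z ω|sigmaAlg X] =ᵐ[P] fun ω => e (X ω) * (P[Z|sigmaAlg X]) ω := by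
  have hm : sigmaAlg X ≤ mΩ := hX.comap_le
  have hYPm : Measurable (fun ω => (Y0 ω, Y1 ω)) := hY0m.prodMk hY1m
  have hmY : MeasurableSpace.comap (fun ω => (Y0 ω, Y1 ω)) inferInstance ≤ mΩ := hYPm.comap_le
  have hm2 : sigmaAlg X ⊔ MeasurableSpace.comap (fun ω => (Y0 ω, Y1 ω)) inferInstance ≤ mΩ :=
    sup_le hm hmY
  -- basic measurability facts
  have hXm : Measurable[sigmaAlg X] X := Measurable.of_comap_le le_rfl
  have heXm : Measurable[sigmaAlg X] (fun ω => e (X ω)) := hem.comp hXm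
  have heXsm : StronglyMeasurable[sigmaAlg X] (fun ω => e (X ω)) := heXm.stronglyMeasurable
  have heXb : ∀ᵐ ω ∂P, |e (X ω)| ≤ 1 := by
    filter_upwards [hoverlap] with ω h
    rw [abs_le]; constructor <;> linarith [h.1, h.2]
  have hWb : ∀ᵐ ω ∂P, |W ω| ≤ 1 := by
    refine Eventually.of_forall fun ω => ?_
    rcases hWbin ω with h | h <;> simp [h]
  have intW : Integrable W P := integrable_of_ae_bound hWm.aestronglyMeasurable hWb
  have inteX : Integrable (fun ω => e (X ω)) P :=
    integrable_of_ae_bound (hem.comp hX).aestronglyMeasurable heXb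
  have hZmΩ : Measurable Z := hZm.mono hm2 le_rfl
  have intZ : Integrable Z P := integrable_of_ae_bound hZmΩ.aestronglyMeasurable hZb
  -- indicator form of W
  have hAind : W = (W ⁻¹' {1}).indicator (fun _ => (1:ℝ)) := by
    funext ω
    rcases hWbin ω with h | h
    · have : ω ∉ W ⁻¹' {1} := by simp [Set.mem_preimage, h]
      simp [Set.indicator_of_notMem this, h]
    · have : ω ∈ W ⁻¹' {1} := by simp [Set.mem_preimage, h]
      simp [Set.indicator_of_mem this, h]
  -- Step 1: P[W|m2] = e(X)
  have hW2 : (fun ω => e (X ω)) =ᵐ[P]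
      P[W|sigmaAlg X ⊔ MeasurableSpace.comap (fun ω => (Y0 ω, Y1 ω)) inferInstance] := by
    have hgen : (sigmaAlg X ⊔ MeasurableSpace.comap (fun ω => (Y0 ω, Y1 ω)) inferInstance
        : MeasurableSpace Ω) = MeasurableSpace.generateFrom {B : Set Ω | ∃ S T : Set Ω,
        MeasurableSet[sigmaAlg X] S ∧
        MeasurableSet[MeasurableSpace.comap (fun ω => (Y0 ω, Y1 ω)) inferInstance] T ∧
        B = S ∩ T} := by
      refine le_antisymm (sup_le ?_ ?_) (MeasurableSpace.generateFrom_le ?_)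
      · intro S hS
        exact MeasurableSpace.measurableSet_generateFrom
          ⟨S, Set.univ, hS, MeasurableSet.univ, (Set.inter_univ S).symm⟩
      · intro T hT
        exact MeasurableSpace.measurableSet_generateFrom
          ⟨Set.univ, T, MeasurableSet.univ, hT, (Set.univ_inter T).symm⟩
      · rintro B ⟨S, T, hS, hT, rfl⟩
        exact ((le_sup_left : sigmaAlg X ≤ _) S hS).inter ((le_sup_right :
          MeasurableSpace.comap (fun ω => (Y0 ω, Y1 ω)) inferInstance ≤ _) T hT)
    have hpi : IsPiSystem {B : Set Ω | ∃ S T : Set Ω,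
        MeasurableSet[sigmaAlg X] S ∧
        MeasurableSet[MeasurableSpace.comap (fun ω => (Y0 ω, Y1 ω)) inferInstance] T ∧
        B = S ∩ T} := by
      rintro B1 ⟨S1, T1, hS1, hT1, rfl⟩ B2 ⟨S2, T2, hS2, hT2, rfl⟩ _
      exact ⟨S1 ∩ S2, T1 ∩ T2, hS1.inter hS2, hT1.inter hT2, by
        ext ω; simp only [Set.mem_inter_iff]; tauto⟩
    have htotal : ∫ ω, e (X ω) ∂P = ∫ ω, W ω ∂P := by
      calc ∫ ω, e (X ω) ∂P = ∫ ω, (P[W|sigmaAlg X]) ω ∂P := integral_congr_ae hprop.symm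
        _ = ∫ ω, W ω ∂P := integral_condExp hm
    have hkey : ∀ B : Set Ω, MeasurableSet[sigmaAlg X ⊔
        MeasurableSpace.comap (fun ω => (Y0 ω, Y1 ω)) inferInstance] B →
        ∫ ω in B, e (X ω) ∂P = ∫ ω in B, W ω ∂P := by
      intro B hB
      refine MeasurableSpace.induction_on_inter
        (m := sigmaAlg X ⊔ MeasurableSpace.comap (fun ω => (Y0 ω, Y1 ω)) inferInstance)
        (C := fun B _ => ∫ ω in B, e (X ω) ∂P = ∫ ω in B, W ω ∂P) hgen hpi (by simp) ?_ ?_ ?_ B hB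
      · -- basic case
        rintro B ⟨S, T, hS, hT, rfl⟩
        obtain ⟨t', ht', rfl⟩ := hT
        have htm : MeasurableSet ((fun ω => (Y0 ω, Y1 ω)) ⁻¹' t') := hYPm ht'
        rw [← setIntegral_indicator htm, ← setIntegral_indicator htm]
        have h1Tb : ∀ᵐ ω ∂P,
            ‖((fun ω => (Y0 ω, Y1 ω)) ⁻¹' t').indicator (fun _ => (1:ℝ)) ω‖ ≤ 1 := by
          refine Eventually.of_forall fun ω => ?_
          by_cases h : ω ∈ (fun ω => (Y0 ω, Y1 ω)) ⁻¹' t' <;>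
            simp [Set.indicator_of_mem, Set.indicator_of_notMem, h]
        have int1T : Integrable (((fun ω => (Y0 ω, Y1 ω)) ⁻¹' t').indicator (fun _ => (1:ℝ))) P :=
          (integrable_const (1:ℝ)).indicator htm
        have hind1 : ((fun ω => (Y0 ω, Y1 ω)) ⁻¹' t').indicator (fun ω => e (X ω))
            = fun ω => e (X ω) * ((fun ω => (Y0 ω, Y1 ω)) ⁻¹' t').indicator (fun _ => (1:ℝ)) ω := by
          funext ω
          by_cases h : ω ∈ (fun ω => (Y0 ω, Y1 ω)) ⁻¹' t' <;>
            simp [Set.indicator_of_mem, Set.indicator_of_notMem, h]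
        have hind2 : ((fun ω => (Y0 ω, Y1 ω)) ⁻¹' t').indicator W
            = fun ω => W ω * ((fun ω => (Y0 ω, Y1 ω)) ⁻¹' t').indicator (fun _ => (1:ℝ)) ω := by
          funext ω
          by_cases h : ω ∈ (fun ω => (Y0 ω, Y1 ω)) ⁻¹' t' <;>
            simp [Set.indicator_of_mem, Set.indicator_of_notMem, h]
        rw [hind1, hind2]
        have inteT : Integrable
            (fun ω => e (X ω) * ((fun ω => (Y0 ω, Y1 ω)) ⁻¹' t').indicator (fun _ => (1:ℝ)) ω) P := by
          refine integrable_of_ae_bound ((hem.comp hX).mul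
            ((measurable_const.indicator htm))).aestronglyMeasurable (C := 1) ?_
          filter_upwards [heXb, h1Tb] with ω h1 h2
          rw [abs_mul]
          calc |e (X ω)| * _ ≤ 1 * 1 := by
                refine mul_le_mul h1 ?_ (abs_nonneg _) zero_le_one
                simpa [Real.norm_eq_abs] using h2
            _ = 1 := by ring
        have intWT : Integrable
            (fun ω => W ω * ((fun ω => (Y0 ω, Y1 ω)) ⁻¹' t').indicator (fun _ => (1:ℝ)) ω) P := by
          refine integrable_of_ae_bound (hWm.mul
            ((measurable_const.indicator htm))).aestronglyMeasurable (C := 1) ?_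
          filter_upwards [hWb, h1Tb] with ω h1 h2
          rw [abs_mul]
          calc |W ω| * _ ≤ 1 * 1 := by
                refine mul_le_mul h1 ?_ (abs_nonneg _) zero_le_one
                simpa [Real.norm_eq_abs] using h2
            _ = 1 := by ring
        have hmul1 : P[fun ω => e (X ω) *
              ((fun ω => (Y0 ω, Y1 ω)) ⁻¹' t').indicator (fun _ => (1:ℝ)) ω|sigmaAlg X]
            =ᵐ[P] fun ω => e (X ω) *
              (P[((fun ω => (Y0 ω, Y1 ω)) ⁻¹' t').indicator (fun _ => (1:ℝ))|sigmaAlg X]) ω := by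
          have := condExp_stronglyMeasurable_mul_of_bound₀ (μ := P) hm
            heXsm.aestronglyMeasurable int1T 1 heXb
          simpa [Pi.mul_def] using this
        have hind3 : (fun ω => W ω *
              ((fun ω => (Y0 ω, Y1 ω)) ⁻¹' t').indicator (fun _ => (1:ℝ)) ω)
            = ((W ⁻¹' {1}) ∩ (fun ω => (Y0 ω, Y1 ω)) ⁻¹' t').indicator (fun _ => (1:ℝ)) := by
          funext ω
          by_cases hA : ω ∈ W ⁻¹' {1}
          · have hW1 : W ω = 1 := hA
            by_cases hT : ω ∈ (fun ω => (Y0 ω, Y1 ω)) ⁻¹' t'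
            · simp [Set.indicator_of_mem, hT, Set.indicator_of_mem (Set.mem_inter hA hT), hW1]
            · have hni : ω ∉ (W ⁻¹' {1}) ∩ (fun ω => (Y0 ω, Y1 ω)) ⁻¹' t' := fun h => hT h.2
              simp [Set.indicator_of_notMem, hT, hni]
          · have hW0 : W ω = 0 := by
              rcases hWbin ω with h | h
              · exact h
              · exact absurd h hA
            have hni : ω ∉ (W ⁻¹' {1}) ∩ (fun ω => (Y0 ω, Y1 ω)) ⁻¹' t' := fun h => hA h.1
            simp [Set.indicator_of_notMem hni, hW0]
        have hcind := (condIndepFun_iff_condExp_inter_preimage_eq_mul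
          (m' := sigmaAlg X) (hm' := hX.comap_le) hWm hYPm).mp hUnconf {1} t'
          (measurableSet_singleton 1) ht'
        have hA1 : (P⟦W ⁻¹' {1}|sigmaAlg X⟧) =ᵐ[P] fun ω => e (X ω) := by
          have heq : (W ⁻¹' {1}).indicator (fun _ => (1:ℝ)) = W := hAind.symm
          calc (P⟦W ⁻¹' {1}|sigmaAlg X⟧) = P[W|sigmaAlg X] := by rw [heq]
            _ =ᵐ[P] fun ω => e (X ω) := hprop
        have hmul2 : P[fun ω => W ω *
              ((fun ω => (Y0 ω, Y1 ω)) ⁻¹' t').indicator (fun _ => (1:ℝ)) ω|sigmaAlg X]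
            =ᵐ[P] fun ω => e (X ω) *
              (P[((fun ω => (Y0 ω, Y1 ω)) ⁻¹' t').indicator (fun _ => (1:ℝ))|sigmaAlg X]) ω := by
          rw [hind3]
          refine hcind.trans ?_
          filter_upwards [hA1] with ω h
          rw [h]
        refine Eq.trans (setIntegral_condExp hm inteT hS).symm
          (Eq.trans ?_ (setIntegral_condExp hm intWT hS))
        exact integral_congr_ae (ae_restrict_of_ae (hmul1.trans hmul2.symm))
      · -- complement
        intro t ht hC
        have h1 := integral_add_compl (hm2 _ ht) inteX
        have h2 := integral_add_compl (hm2 _ ht) intW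
        linarith
      · -- union
        intro f hd hf hC
        rw [integral_iUnion (fun i => hm2 _ (hf i)) hd inteX.integrableOn,
          integral_iUnion (fun i => hm2 _ (hf i)) hd intW.integrableOn]
        exact tsum_congr hC
    exact ae_eq_condExp_of_forall_setIntegral_eq hm2 intW
      (fun s _ _ => inteX.integrableOn) (fun s hs _ => hkey s hs)
      ((heXsm.mono (le_sup_left : sigmaAlg X ≤ sigmaAlg X ⊔
        MeasurableSpace.comap (fun ω => (Y0 ω, Y1 ω)) inferInstance)).aestronglyMeasurable (μ := P))
  -- Step 2: chain of conditional expectations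
  have intWZ : Integrable (fun ω => W ω * Z ω) P := by
    refine integrable_of_ae_bound (hWm.mul hZmΩ).aestronglyMeasurable (C := |CZ|) ?_
    filter_upwards [hWb, hZb] with ω h1 h2
    rw [abs_mul]
    calc |W ω| * |Z ω| ≤ 1 * |CZ| :=
        mul_le_mul h1 (h2.trans (le_abs_self _)) (abs_nonneg _) zero_le_one
      _ = |CZ| := one_mul _
  have hZsm2 : StronglyMeasurable[sigmaAlg X ⊔
      MeasurableSpace.comap (fun ω => (Y0 ω, Y1 ω)) inferInstance] Z := hZm.stronglyMeasurable
  have sb : P[fun ω => W ω * Z ω|sigmaAlg X ⊔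
      MeasurableSpace.comap (fun ω => (Y0 ω, Y1 ω)) inferInstance]
      =ᵐ[P] fun ω => Z ω * e (X ω) := by
    have b1 := condExp_stronglyMeasurable_mul_of_bound₀ (μ := P) hm2
      hZsm2.aestronglyMeasurable intW |CZ|
      (by filter_upwards [hZb] with ω h; simpa [Real.norm_eq_abs] using h.trans (le_abs_self _))
    have hcomm : (fun ω => W ω * Z ω) = Z * W := by funext ω; exact mul_comm _ _
    rw [hcomm]
    refine b1.trans ?_
    filter_upwards [hW2] with ω h
    simp only [Pi.mul_apply]
    rw [← h]
  have sa : P[fun ω => W ω * Z ω|sigmaAlg X]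
      =ᵐ[P] P[fun ω => e (X ω) * Z ω|sigmaAlg X] := by
    refine ((condExp_condExp_of_le (le_sup_left : sigmaAlg X ≤ _) hm2
      (f := fun ω => W ω * Z ω)).symm).trans ?_
    refine (condExp_congr_ae (sb.trans ?_))
    exact Eventually.of_forall fun ω => mul_comm _ _
  refine sa.trans ?_
  have := condExp_stronglyMeasurable_mul_of_bound₀ (μ := P) hm
    heXsm.aestronglyMeasurable intZ 1 heXb
  simpa [Pi.mul_def] using this

lemma condExp_aipw (X : Ω → 𝒳) (hX : Measurable X)
    (W : Ω → ℝ) (hWm : Measurable W) (hWbin : ∀ ω, W ω = 0 ∨ W ω = 1)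
    (Y0 Y1 : Ω → ℝ) (hY0m : Measurable Y0) (hY1m : Measurable Y1)
    (CY : ℝ) (hYbdd : ∀ ω, |Y0 ω| ≤ CY ∧ |Y1 ω| ≤ CY)
    (Y : Ω → ℝ) (hSUTVA : ∀ ω, Y ω = W ω * Y1 ω + (1 - W ω) * Y0 ω)
    (hUnconf : CondIndepFun (sigmaAlg X) hX.comap_le W (fun ω => (Y0 ω, Y1 ω)) P)
    (e : 𝒳 → ℝ) (hem : Measurable e)
    (hprop : P[W|sigmaAlg X] =ᵐ[P] (fun ω => e (X ω)))
    (hoverlap : ∀ᵐ ω ∂P, 0 < e (X ω) ∧ e (X ω) < 1)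
    (μ0 μ1 : 𝒳 → ℝ) (hμ0m : Measurable μ0) (hμ1m : Measurable μ1)
    (hμ0c : P[Y0|sigmaAlg X] =ᵐ[P] (fun ω => μ0 (X ω)))
    (hμ1c : P[Y1|sigmaAlg X] =ᵐ[P] (fun ω => μ1 (X ω)))
    (q τ' m0' m1' et' : 𝒳 → ℝ)
    (hqm : Measurable q) (hτ'm : Measurable τ') (hm0'm : Measurable m0')
    (hm1'm : Measurable m1') (het'm : Measurable et')
    (Cb : ℝ)
    (hqb : ∀ᵐ ω ∂P, |q (X ω)| ≤ Cb)
    (hqet : ∀ᵐ ω ∂P, (0 < et' (X ω) ∧ et' (X ω) < 1) ∧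
      |q (X ω) / et' (X ω)| ≤ Cb ∧ |q (X ω) / (1 - et' (X ω))| ≤ Cb)
    (hcb : ∀ x, |τ' x| ≤ Cb ∧ |m0' x| ≤ Cb ∧ |m1' x| ≤ Cb) :
    P[(fun ω => q (X ω) * (τ' (X ω) - (m1' (X ω) - m0' (X ω)) -
        (W ω - et' (X ω)) * (Y ω - W ω * m1' (X ω) - (1 - W ω) * m0' (X ω)) /
        (et' (X ω) * (1 - et' (X ω)))))|sigmaAlg X]
      =ᵐ[P] fun ω => q (X ω) * (τ' (X ω) - (m1' (X ω) - m0' (X ω)))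
        - q (X ω) / et' (X ω) * (e (X ω) * (μ1 (X ω) - m1' (X ω)))
        + q (X ω) / (1 - et' (X ω)) * ((1 - e (X ω)) * (μ0 (X ω) - m0' (X ω))) := by
  have hm : sigmaAlg X ≤ mΩ := hX.comap_le
  have hYPm : Measurable (fun ω => (Y0 ω, Y1 ω)) := hY0m.prodMk hY1m
  have hXm : Measurable[sigmaAlg X] X := Measurable.of_comap_le le_rfl
  have hWb : ∀ ω, |W ω| ≤ 1 := by
    intro ω; rcases hWbin ω with h | h <;> simp [h]
  haveI : (MeasureTheory.ae P).NeBot :=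
    MeasureTheory.ae_neBot.mpr (IsProbabilityMeasure.ne_zero P)
  obtain ⟨ω₀, hω₀⟩ := hqb.exists
  have hCb0 : 0 ≤ Cb := (abs_nonneg _).trans hω₀
  have hCY0 : 0 ≤ CY := (abs_nonneg _).trans (hYbdd ω₀).1
  -- measurability in the sup σ-algebra
  have hY1m2 : Measurable[sigmaAlg X ⊔
      MeasurableSpace.comap (fun ω => (Y0 ω, Y1 ω)) inferInstance] Y1 := by
    have h1 : Measurable[MeasurableSpace.comap (fun ω => (Y0 ω, Y1 ω)) inferInstance] Y1 :=
      measurable_snd.comp (Measurable.of_comap_le le_rfl)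
    exact h1.mono le_sup_right le_rfl
  have hY0m2 : Measurable[sigmaAlg X ⊔
      MeasurableSpace.comap (fun ω => (Y0 ω, Y1 ω)) inferInstance] Y0 := by
    have h1 : Measurable[MeasurableSpace.comap (fun ω => (Y0 ω, Y1 ω)) inferInstance] Y0 :=
      measurable_fst.comp (Measurable.of_comap_le le_rfl)
    exact h1.mono le_sup_right le_rfl
  have hZ1m2 : Measurable[sigmaAlg X ⊔
      MeasurableSpace.comap (fun ω => (Y0 ω, Y1 ω)) inferInstance]
      (fun ω => Y1 ω - m1' (X ω)) :=
    hY1m2.sub ((hm1'm.comp hXm).mono le_sup_left le_rfl)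
  have hZ0m2 : Measurable[sigmaAlg X ⊔
      MeasurableSpace.comap (fun ω => (Y0 ω, Y1 ω)) inferInstance]
      (fun ω => Y0 ω - m0' (X ω)) :=
    hY0m2.sub ((hm0'm.comp hXm).mono le_sup_left le_rfl)
  -- bounds
  have hZ1b : ∀ ω, |Y1 ω - m1' (X ω)| ≤ CY + Cb := by
    intro ω
    have t1 := abs_le.mp (hYbdd ω).2
    have t2 := abs_le.mp (hcb (X ω)).2.2
    exact abs_le.mpr ⟨by linarith [t1.1, t2.2], by linarith [t1.2, t2.1]⟩
  have hZ0b : ∀ ω, |Y0 ω - m0' (X ω)| ≤ CY + Cb := by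
    intro ω
    have t1 := abs_le.mp (hYbdd ω).1
    have t2 := abs_le.mp (hcb (X ω)).2.1
    exact abs_le.mpr ⟨by linarith [t1.1, t2.2], by linarith [t1.2, t2.1]⟩
  -- integrability
  have intY1 : Integrable Y1 P := integrable_of_ae_bound hY1m.aestronglyMeasurable
    (Eventually.of_forall fun ω => (hYbdd ω).2)
  have intY0 : Integrable Y0 P := integrable_of_ae_bound hY0m.aestronglyMeasurable
    (Eventually.of_forall fun ω => (hYbdd ω).1)
  have intm1X : Integrable (fun ω => m1' (X ω)) P :=
    integrable_of_ae_bound (hm1'm.comp hX).aestronglyMeasurable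
      (Eventually.of_forall fun ω => (hcb (X ω)).2.2)
  have intm0X : Integrable (fun ω => m0' (X ω)) P :=
    integrable_of_ae_bound (hm0'm.comp hX).aestronglyMeasurable
      (Eventually.of_forall fun ω => (hcb (X ω)).2.1)
  have intZ1 : Integrable (fun ω => Y1 ω - m1' (X ω)) P :=
    integrable_of_ae_bound (hY1m.sub (hm1'm.comp hX)).aestronglyMeasurable
      (Eventually.of_forall hZ1b)
  have intZ0 : Integrable (fun ω => Y0 ω - m0' (X ω)) P :=
    integrable_of_ae_bound (hY0m.sub (hm0'm.comp hX)).aestronglyMeasurable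
      (Eventually.of_forall hZ0b)
  have hWZ1b : ∀ ω, |W ω * (Y1 ω - m1' (X ω))| ≤ CY + Cb := by
    intro ω
    rw [abs_mul]
    calc |W ω| * |Y1 ω - m1' (X ω)| ≤ 1 * (CY + Cb) :=
        mul_le_mul (hWb ω) (hZ1b ω) (abs_nonneg _) zero_le_one
      _ = CY + Cb := one_mul _
  have hWZ0b : ∀ ω, |W ω * (Y0 ω - m0' (X ω))| ≤ CY + Cb := by
    intro ω
    rw [abs_mul]
    calc |W ω| * |Y0 ω - m0' (X ω)| ≤ 1 * (CY + Cb) :=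
        mul_le_mul (hWb ω) (hZ0b ω) (abs_nonneg _) zero_le_one
      _ = CY + Cb := one_mul _
  have intWZ1 : Integrable (fun ω => W ω * (Y1 ω - m1' (X ω))) P :=
    integrable_of_ae_bound (hWm.mul (hY1m.sub (hm1'm.comp hX))).aestronglyMeasurable
      (Eventually.of_forall hWZ1b)
  have intWZ0 : Integrable (fun ω => W ω * (Y0 ω - m0' (X ω))) P :=
    integrable_of_ae_bound (hWm.mul (hY0m.sub (hm0'm.comp hX))).aestronglyMeasurable
      (Eventually.of_forall hWZ0b)
  -- the three pieces
  have intG1 : Integrable (fun ω => q (X ω) * (τ' (X ω) - (m1' (X ω) - m0' (X ω)))) P := by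
    refine integrable_of_ae_bound
      ((hqm.comp hX).mul ((hτ'm.comp hX).sub
        ((hm1'm.comp hX).sub (hm0'm.comp hX)))).aestronglyMeasurable
      (C := Cb * (Cb + (Cb + Cb))) ?_
    filter_upwards [hqb] with ω h1
    rw [abs_mul]
    refine mul_le_mul h1 ?_ (abs_nonneg _) hCb0
    have t1 := abs_le.mp (hcb (X ω)).1
    have t2 := abs_le.mp (hcb (X ω)).2.1
    have t3 := abs_le.mp (hcb (X ω)).2.2
    exact abs_le.mpr ⟨by linarith [t1.1, t2.2, t3.2], by linarith [t1.2, t2.1, t3.1]⟩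
  have intG2 : Integrable (fun ω => q (X ω) / et' (X ω) * (W ω * (Y1 ω - m1' (X ω)))) P := by
    refine integrable_of_ae_bound
      (((hqm.comp hX).div (het'm.comp hX)).mul
        (hWm.mul (hY1m.sub (hm1'm.comp hX)))).aestronglyMeasurable
      (C := Cb * (CY + Cb)) ?_
    filter_upwards [hqet] with ω h
    rw [abs_mul]
    exact mul_le_mul h.2.1 (hWZ1b ω) (abs_nonneg _) hCb0
  have intG3 : Integrable
      (fun ω => q (X ω) / (1 - et' (X ω)) * ((1 - W ω) * (Y0 ω - m0' (X ω)))) P := by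
    refine integrable_of_ae_bound
      (((hqm.comp hX).div (measurable_const.sub (het'm.comp hX))).mul
        ((measurable_const.sub hWm).mul (hY0m.sub (hm0'm.comp hX)))).aestronglyMeasurable
      (C := Cb * ((CY + Cb) + (CY + Cb))) ?_
    filter_upwards [hqet] with ω h
    rw [abs_mul]
    refine mul_le_mul h.2.2 ?_ (abs_nonneg _) hCb0
    have h1W : |1 - W ω| ≤ 1 := by
      rcases hWbin ω with hh | hh <;> simp [hh]
    rw [abs_mul]
    calc |1 - W ω| * |Y0 ω - m0' (X ω)| ≤ 1 * (CY + Cb) :=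
        mul_le_mul h1W (hZ0b ω) (abs_nonneg _) zero_le_one
      _ ≤ (CY + Cb) + (CY + Cb) := by linarith [hCY0, hCb0]
  -- conditional expectations of the inner pieces
  have hZ1c : P[(fun ω => Y1 ω - m1' (X ω))|sigmaAlg X]
      =ᵐ[P] fun ω => μ1 (X ω) - m1' (X ω) := by
    have hsub := condExp_sub (μ := P) (m := sigmaAlg X) intY1 intm1X
    have hself : P[(fun ω => m1' (X ω))|sigmaAlg X] = fun ω => m1' (X ω) :=
      condExp_of_stronglyMeasurable hm ((hm1'm.comp hXm).stronglyMeasurable) intm1X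
    have heq : (fun ω => Y1 ω - m1' (X ω)) = Y1 - (fun ω => m1' (X ω)) := rfl
    rw [heq]
    refine hsub.trans ?_
    filter_upwards [hμ1c] with ω h
    simp only [Pi.sub_apply]
    rw [h, hself]
  have hZ0c : P[(fun ω => Y0 ω - m0' (X ω))|sigmaAlg X]
      =ᵐ[P] fun ω => μ0 (X ω) - m0' (X ω) := by
    have hsub := condExp_sub (μ := P) (m := sigmaAlg X) intY0 intm0X
    have hself : P[(fun ω => m0' (X ω))|sigmaAlg X] = fun ω => m0' (X ω) :=
      condExp_of_stronglyMeasurable hm ((hm0'm.comp hXm).stronglyMeasurable) intm0X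
    have heq : (fun ω => Y0 ω - m0' (X ω)) = Y0 - (fun ω => m0' (X ω)) := rfl
    rw [heq]
    refine hsub.trans ?_
    filter_upwards [hμ0c] with ω h
    simp only [Pi.sub_apply]
    rw [h, hself]
  have h1 := condExp_W_mul X hX W hWm hWbin Y0 Y1 hY0m hY1m hUnconf e hem hprop hoverlap
    (fun ω => Y1 ω - m1' (X ω)) hZ1m2 (CY + Cb) (Eventually.of_forall hZ1b)
  have h0 := condExp_W_mul X hX W hWm hWbin Y0 Y1 hY0m hY1m hUnconf e hem hprop hoverlap
    (fun ω => Y0 ω - m0' (X ω)) hZ0m2 (CY + Cb) (Eventually.of_forall hZ0b)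
  have h1' : P[(fun ω => W ω * (Y1 ω - m1' (X ω)))|sigmaAlg X]
      =ᵐ[P] fun ω => e (X ω) * (μ1 (X ω) - m1' (X ω)) := by
    refine h1.trans ?_
    filter_upwards [hZ1c] with ω h
    rw [h]
  have h0' : P[(fun ω => (1 - W ω) * (Y0 ω - m0' (X ω)))|sigmaAlg X]
      =ᵐ[P] fun ω => (1 - e (X ω)) * (μ0 (X ω) - m0' (X ω)) := by
    have heq : (fun ω => (1 - W ω) * (Y0 ω - m0' (X ω)))
        = (fun ω => Y0 ω - m0' (X ω)) - (fun ω => W ω * (Y0 ω - m0' (X ω))) := by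
      funext ω; simp only [Pi.sub_apply]; ring
    rw [heq]
    refine (condExp_sub (m := sigmaAlg X) intZ0 intWZ0).trans ?_
    filter_upwards [hZ0c, h0.trans (EventuallyEq.rfl.mul hZ0c)] with ω ha hb
    simp only [Pi.sub_apply]
    rw [ha]
    have hb' : (P[fun ω => W ω * (Y0 ω - m0' (X ω))|sigmaAlg X]) ω
        = e (X ω) * (μ0 (X ω) - m0' (X ω)) := hb
    rw [hb']; ring
  -- pull-out for G2 and G3
  have hG2 : P[(fun ω => q (X ω) / et' (X ω) * (W ω * (Y1 ω - m1' (X ω))))|sigmaAlg X]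
      =ᵐ[P] fun ω => q (X ω) / et' (X ω) * (e (X ω) * (μ1 (X ω) - m1' (X ω))) := by
    have hpull := condExp_stronglyMeasurable_mul_of_bound₀ (μ := P) hm
      (((hqm.comp hXm).div (het'm.comp hXm)).stronglyMeasurable).aestronglyMeasurable
      intWZ1 Cb (by
        filter_upwards [hqet] with ω h
        rw [Real.norm_eq_abs]; exact h.2.1)
    have hpull' : P[(fun ω => q (X ω) / et' (X ω) * (W ω * (Y1 ω - m1' (X ω))))|sigmaAlg X]
        =ᵐ[P] fun ω => q (X ω) / et' (X ω)
          * (P[(fun ω => W ω * (Y1 ω - m1' (X ω)))|sigmaAlg X]) ω := by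
      simpa [Pi.mul_def] using hpull
    refine hpull'.trans ?_
    filter_upwards [h1'] with ω h
    rw [h]
  have hG3 : P[(fun ω => q (X ω) / (1 - et' (X ω))
        * ((1 - W ω) * (Y0 ω - m0' (X ω))))|sigmaAlg X]
      =ᵐ[P] fun ω => q (X ω) / (1 - et' (X ω))
        * ((1 - e (X ω)) * (μ0 (X ω) - m0' (X ω))) := by
    have int1WZ0 : Integrable (fun ω => (1 - W ω) * (Y0 ω - m0' (X ω))) P := by
      have heq : (fun ω => (1 - W ω) * (Y0 ω - m0' (X ω)))
          = (fun ω => Y0 ω - m0' (X ω)) - (fun ω => W ω * (Y0 ω - m0' (X ω))) := by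
        funext ω; simp only [Pi.sub_apply]; ring
      rw [heq]; exact intZ0.sub intWZ0
    have hpull := condExp_stronglyMeasurable_mul_of_bound₀ (μ := P) hm
      (((hqm.comp hXm).div (measurable_const.sub (het'm.comp hXm))).stronglyMeasurable).aestronglyMeasurable
      int1WZ0 Cb (by
        filter_upwards [hqet] with ω h
        rw [Real.norm_eq_abs]; exact h.2.2)
    have hpull' : P[(fun ω => q (X ω) / (1 - et' (X ω))
          * ((1 - W ω) * (Y0 ω - m0' (X ω))))|sigmaAlg X]
        =ᵐ[P] fun ω => q (X ω) / (1 - et' (X ω))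
          * (P[(fun ω => (1 - W ω) * (Y0 ω - m0' (X ω)))|sigmaAlg X]) ω := by
      simpa [Pi.mul_def] using hpull
    refine hpull'.trans ?_
    filter_upwards [h0'] with ω h
    rw [h]
  -- decomposition
  have hdec : (fun ω => q (X ω) * (τ' (X ω) - (m1' (X ω) - m0' (X ω)) -
        (W ω - et' (X ω)) * (Y ω - W ω * m1' (X ω) - (1 - W ω) * m0' (X ω)) /
        (et' (X ω) * (1 - et' (X ω)))))
      =ᵐ[P] ((fun ω => q (X ω) * (τ' (X ω) - (m1' (X ω) - m0' (X ω))))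
        - (fun ω => q (X ω) / et' (X ω) * (W ω * (Y1 ω - m1' (X ω))))
        + (fun ω => q (X ω) / (1 - et' (X ω)) * ((1 - W ω) * (Y0 ω - m0' (X ω))))) := by
    filter_upwards [hqet] with ω h
    have he0 : et' (X ω) ≠ 0 := ne_of_gt h.1.1
    have h1e : (1:ℝ) - et' (X ω) ≠ 0 := ne_of_gt (by linarith [h.1.2])
    simp only [Pi.add_apply, Pi.sub_apply]
    rcases hWbin ω with hw | hw <;> rw [hSUTVA ω, hw] <;> field_simp <;> ring
  -- assemble
  refine (condExp_congr_ae hdec).trans ?_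
  refine (condExp_add (m := sigmaAlg X) (intG1.sub intG2) intG3).trans ?_
  have hsub2 := condExp_sub (μ := P) (m := sigmaAlg X) intG1 intG2
  have hself1 : P[(fun ω => q (X ω) * (τ' (X ω) - (m1' (X ω) - m0' (X ω))))|sigmaAlg X]
      = fun ω => q (X ω) * (τ' (X ω) - (m1' (X ω) - m0' (X ω))) :=
    condExp_of_stronglyMeasurable hm
      (((hqm.comp hXm).mul ((hτ'm.comp hXm).sub
        ((hm1'm.comp hXm).sub (hm0'm.comp hXm)))).stronglyMeasurable) intG1
  filter_upwards [hsub2, hG2, hG3] with ω hA hB hC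
  simp only [Pi.add_apply]
  rw [hA]
  simp only [Pi.sub_apply]
  rw [hself1, hB, hC]

end AuxiliaryLemmas


set_option maxHeartbeats 2000000 in
theorem stmt_10
    {Ω 𝒳 : Type*} [MeasurableSpace Ω] [StandardBorelSpace Ω] [MeasurableSpace 𝒳]
    (P : Measure Ω) [IsProbabilityMeasure P]
    (X : Ω → 𝒳) (hX : Measurable X)
    (W : Ω → ℝ) (hWm : Measurable W) (hWbin : ∀ ω, W ω = 0 ∨ W ω = 1)
    (Y0 Y1 : Ω → ℝ) (hY0m : Measurable Y0) (hY1m : Measurable Y1)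
    (CY : ℝ) (hYbdd : ∀ ω, |Y0 ω| ≤ CY ∧ |Y1 ω| ≤ CY)
    (Y : Ω → ℝ) (hSUTVA : ∀ ω, Y ω = W ω * Y1 ω + (1 - W ω) * Y0 ω)
    (hUnconf : CondIndepFun (sigmaAlg X) hX.comap_le W (fun ω => (Y0 ω, Y1 ω)) P)
    (e : 𝒳 → ℝ) (hem : Measurable e)
    (hprop : P[W|sigmaAlg X] =ᵐ[P] (fun ω => e (X ω)))
    (hoverlap : ∀ᵐ ω ∂P, 0 < e (X ω) ∧ e (X ω) < 1)
    (μ0 μ1 : 𝒳 → ℝ) (hμ0m : Measurable μ0) (hμ1m : Measurable μ1)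
    (Cμ : ℝ) (hμbdd : ∀ x, |μ0 x| ≤ Cμ ∧ |μ1 x| ≤ Cμ)
    (hμ0c : P[Y0|sigmaAlg X] =ᵐ[P] (fun ω => μ0 (X ω)))
    (hμ1c : P[Y1|sigmaAlg X] =ᵐ[P] (fun ω => μ1 (X ω)))
    (r : 𝒳 → ℝ) (hrm : Measurable r) (hr01 : ∀ x, 0 < r x ∧ r x < 1)
    (M : ℝ) (hMpos : 0 < M)
    (hM : ∀ᵐ ω ∂P, r (X ω) * (1 - r (X ω)) / (e (X ω) * (1 - e (X ω))) ≤ M)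
    (τt m0t m1t : 𝒳 → ℝ) (hτtm : Measurable τt) (hm0tm : Measurable m0t) (hm1tm : Measurable m1t)
    (Cτt : ℝ) (hτtb : ∀ x, |τt x| ≤ Cτt)
    (Cmt : ℝ) (hmtb : ∀ x, |m0t x| ≤ Cmt ∧ |m1t x| ≤ Cmt)
    (et : 𝒳 → ℝ) (hetm : Measurable et)
    (ce : ℝ) (hce : 0 < ce) (hetb : ∀ᵐ ω ∂P, ce ≤ et (X ω) ∧ et (X ω) ≤ 1 - ce) :
    (P[(fun ω => r (X ω) * (1 - r (X ω)) * (τt (X ω) - (m1t (X ω) - m0t (X ω)) - (W ω - e (X ω)) * (Y ω - W ω * m1t (X ω) - (1 - W ω) * m0t (X ω)) / (e (X ω) * (1 - e (X ω)))))|sigmaAlg X] =ᵐ[P] (fun ω => r (X ω) * (1 - r (X ω)) * (τt (X ω) - (μ1 (X ω) - μ0 (X ω))))) ∧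
    (P[(fun ω => r (X ω) * (1 - r (X ω)) * (τt (X ω) - (μ1 (X ω) - μ0 (X ω)) - (W ω - et (X ω)) * (Y ω - W ω * μ1 (X ω) - (1 - W ω) * μ0 (X ω)) / (et (X ω) * (1 - et (X ω)))))|sigmaAlg X] =ᵐ[P] (fun ω => r (X ω) * (1 - r (X ω)) * (τt (X ω) - (μ1 (X ω) - μ0 (X ω))))) ∧
    ((P[(fun ω => r (X ω) * (1 - r (X ω)) * (τt (X ω) - (m1t (X ω) - m0t (X ω)) - (W ω - e (X ω)) * (Y ω - W ω * m1t (X ω) - (1 - W ω) * m0t (X ω)) / (e (X ω) * (1 - e (X ω)))))|sigmaAlg X] =ᵐ[P] 0 ∧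
      P[(fun ω => r (X ω) * (1 - r (X ω)) * (τt (X ω) - (μ1 (X ω) - μ0 (X ω)) - (W ω - et (X ω)) * (Y ω - W ω * μ1 (X ω) - (1 - W ω) * μ0 (X ω)) / (et (X ω) * (1 - et (X ω)))))|sigmaAlg X] =ᵐ[P] 0) ↔
      (∀ᵐ ω ∂P, τt (X ω) = μ1 (X ω) - μ0 (X ω))) ∧
    (∀ he h0 h1 : 𝒳 → ℝ, Measurable he → Measurable h0 → Measurable h1 →
      (∃ C : ℝ, ∀ x, |he x| ≤ C) → (∃ C : ℝ, ∀ x, |h0 x| ≤ C) → (∃ C : ℝ, ∀ x, |h1 x| ≤ C) →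
      (∃ δ > (0:ℝ), ∃ c > (0:ℝ), ∀ t : ℝ, |t| < δ →
        ∀ᵐ ω ∂P, c ≤ e (X ω) + t * he (X ω) ∧ e (X ω) + t * he (X ω) ≤ 1 - c) →
      ∃ g : ℝ → Ω → ℝ,
        (∀ t : ℝ, g t =ᵐ[P]
          P[(fun ω => r (X ω) * (1 - r (X ω)) * ((μ1 (X ω) - μ0 (X ω)) - ((μ1 (X ω) + t * h1 (X ω)) - (μ0 (X ω) + t * h0 (X ω))) - (W ω - (e (X ω) + t * he (X ω))) * (Y ω - W ω * (μ1 (X ω) + t * h1 (X ω)) - (1 - W ω) * (μ0 (X ω) + t * h0 (X ω))) / ((e (X ω) + t * he (X ω)) * (1 - (e (X ω) + t * he (X ω))))))|sigmaAlg X]) ∧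
        (∀ᵐ ω ∂P, HasDerivAt (fun t => g t ω) 0 0)) := by
  have hqmeas : Measurable (fun x => r x * (1 - r x)) := hrm.mul (measurable_const.sub hrm)
  have hqb1 : ∀ x, |r x * (1 - r x)| ≤ 1 := by
    intro x
    have h := hr01 x
    rw [abs_of_pos (mul_pos h.1 (by linarith))]
    nlinarith
  have hqpos : ∀ x, 0 < r x * (1 - r x) := fun x =>
    mul_pos (hr01 x).1 (by linarith [(hr01 x).2])
  -- Part 1
  have hpart1raw := condExp_aipw X hX W hWm hWbin Y0 Y1 hY0m hY1m CY hYbdd Y hSUTVA hUnconf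
    e hem hprop hoverlap μ0 μ1 hμ0m hμ1m hμ0c hμ1c
    (fun x => r x * (1 - r x)) τt m0t m1t e hqmeas hτtm hm0tm hm1tm hem
    (M + 1 + |Cτt| + |Cmt|)
    (Eventually.of_forall fun ω => (hqb1 _).trans
      (by linarith [abs_nonneg Cτt, abs_nonneg Cmt]))
    (by
      filter_upwards [hoverlap, hM] with ω hov hMω
      obtain ⟨he0, he1⟩ := hov
      have hne1 : e (X ω) ≠ 0 := ne_of_gt he0
      have hne2 : (1:ℝ) - e (X ω) ≠ 0 := ne_of_gt (by linarith)
      have hq0 : 0 < r (X ω) * (1 - r (X ω)) := hqpos _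
      refine ⟨⟨he0, he1⟩, ?_, ?_⟩
      · have key : r (X ω) * (1 - r (X ω)) / e (X ω)
            = r (X ω) * (1 - r (X ω)) / (e (X ω) * (1 - e (X ω))) * (1 - e (X ω)) := by
          rw [div_mul_eq_mul_div, div_eq_div_iff hne1 (mul_ne_zero hne1 hne2)]
          ring
        rw [abs_of_pos (div_pos hq0 he0), key]
        calc r (X ω) * (1 - r (X ω)) / (e (X ω) * (1 - e (X ω))) * (1 - e (X ω))
            ≤ M * 1 := mul_le_mul hMω (by linarith) (by linarith) hMpos.le
          _ ≤ M + 1 + |Cτt| + |Cmt| := by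
              rw [mul_one]; linarith [abs_nonneg Cτt, abs_nonneg Cmt]
      · have key : r (X ω) * (1 - r (X ω)) / (1 - e (X ω))
            = r (X ω) * (1 - r (X ω)) / (e (X ω) * (1 - e (X ω))) * e (X ω) := by
          rw [div_mul_eq_mul_div, div_eq_div_iff hne2 (mul_ne_zero hne1 hne2)]
          ring
        rw [abs_of_pos (div_pos hq0 (by linarith)), key]
        calc r (X ω) * (1 - r (X ω)) / (e (X ω) * (1 - e (X ω))) * e (X ω)
            ≤ M * 1 := mul_le_mul hMω (by linarith) (by linarith) hMpos.le
          _ ≤ M + 1 + |Cτt| + |Cmt| := by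
              rw [mul_one]; linarith [abs_nonneg Cτt, abs_nonneg Cmt])
    (by
      intro x
      refine ⟨(hτtb x).trans ((le_abs_self _).trans
        (by linarith [abs_nonneg Cmt] : |Cτt| ≤ M + 1 + |Cτt| + |Cmt|)), ?_, ?_⟩
      · exact (hmtb x).1.trans ((le_abs_self _).trans
          (by linarith [abs_nonneg Cτt] : |Cmt| ≤ M + 1 + |Cτt| + |Cmt|))
      · exact (hmtb x).2.trans ((le_abs_self _).trans
          (by linarith [abs_nonneg Cτt] : |Cmt| ≤ M + 1 + |Cτt| + |Cmt|)))
  have hP1 : P[(fun ω => r (X ω) * (1 - r (X ω)) * (τt (X ω) - (m1t (X ω) - m0t (X ω)) -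
        (W ω - e (X ω)) * (Y ω - W ω * m1t (X ω) - (1 - W ω) * m0t (X ω)) /
        (e (X ω) * (1 - e (X ω)))))|sigmaAlg X]
      =ᵐ[P] (fun ω => r (X ω) * (1 - r (X ω)) * (τt (X ω) - (μ1 (X ω) - μ0 (X ω)))) := by
    refine hpart1raw.trans ?_
    filter_upwards [hoverlap] with ω hov
    have hne1 : e (X ω) ≠ 0 := ne_of_gt hov.1
    have hne2 : (1:ℝ) - e (X ω) ≠ 0 := ne_of_gt (by linarith [hov.2])
    field_simp
    ring
  -- Part 2
  have hpart2raw := condExp_aipw X hX W hWm hWbin Y0 Y1 hY0m hY1m CY hYbdd Y hSUTVA hUnconf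
    e hem hprop hoverlap μ0 μ1 hμ0m hμ1m hμ0c hμ1c
    (fun x => r x * (1 - r x)) τt μ0 μ1 et hqmeas hτtm hμ0m hμ1m hetm
    (1 + ce⁻¹ + |Cτt| + |Cμ|)
    (Eventually.of_forall fun ω => (hqb1 _).trans
      (by linarith [abs_nonneg Cτt, abs_nonneg Cμ, inv_nonneg.mpr hce.le]))
    (by
      filter_upwards [hetb] with ω hb
      obtain ⟨hl, hr'⟩ := hb
      have h0lt : 0 < et (X ω) := lt_of_lt_of_le hce hl
      have hlt1 : et (X ω) < 1 := lt_of_le_of_lt hr' (by linarith)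
      refine ⟨⟨h0lt, hlt1⟩, ?_, ?_⟩
      · rw [abs_div]
        calc |r (X ω) * (1 - r (X ω))| / |et (X ω)| ≤ 1 / ce :=
            div_le_div₀ zero_le_one (hqb1 _) hce (by rw [abs_of_pos h0lt]; exact hl)
          _ = ce⁻¹ := one_div _
          _ ≤ 1 + ce⁻¹ + |Cτt| + |Cμ| := by linarith [abs_nonneg Cτt, abs_nonneg Cμ]
      · rw [abs_div]
        have hden : ce ≤ |1 - et (X ω)| := by
          rw [abs_of_pos (by linarith : (0:ℝ) < 1 - et (X ω))]; linarith
        calc |r (X ω) * (1 - r (X ω))| / |1 - et (X ω)| ≤ 1 / ce :=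
            div_le_div₀ zero_le_one (hqb1 _) hce hden
          _ = ce⁻¹ := one_div _
          _ ≤ 1 + ce⁻¹ + |Cτt| + |Cμ| := by linarith [abs_nonneg Cτt, abs_nonneg Cμ])
    (by
      intro x
      have hi : (0:ℝ) ≤ ce⁻¹ := inv_nonneg.mpr hce.le
      refine ⟨(hτtb x).trans ((le_abs_self _).trans (by linarith [abs_nonneg Cμ])), ?_, ?_⟩
      · exact (hμbdd x).1.trans ((le_abs_self _).trans (by linarith [abs_nonneg Cτt]))
      · exact (hμbdd x).2.trans ((le_abs_self _).trans (by linarith [abs_nonneg Cτt])))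
  have hP2 : P[(fun ω => r (X ω) * (1 - r (X ω)) * (τt (X ω) - (μ1 (X ω) - μ0 (X ω)) -
        (W ω - et (X ω)) * (Y ω - W ω * μ1 (X ω) - (1 - W ω) * μ0 (X ω)) /
        (et (X ω) * (1 - et (X ω)))))|sigmaAlg X]
      =ᵐ[P] (fun ω => r (X ω) * (1 - r (X ω)) * (τt (X ω) - (μ1 (X ω) - μ0 (X ω)))) := by
    refine hpart2raw.trans ?_
    refine Eventually.of_forall fun ω => ?_
    simp [sub_self]
  refine ⟨hP1, hP2, ?_, ?_⟩
  · -- Part 3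
    constructor
    · rintro ⟨hz, -⟩
      have hzz : (fun ω => r (X ω) * (1 - r (X ω)) * (τt (X ω) - (μ1 (X ω) - μ0 (X ω))))
          =ᵐ[P] 0 := hP1.symm.trans hz
      filter_upwards [hzz] with ω h
      have h' : r (X ω) * (1 - r (X ω)) * (τt (X ω) - (μ1 (X ω) - μ0 (X ω))) = 0 := h
      rcases mul_eq_zero.mp h' with h'' | h''
      · exact absurd h'' (ne_of_gt (hqpos (X ω)))
      · have := sub_eq_zero.mp h''
        linarith
    · intro h
      have hz : (fun ω => r (X ω) * (1 - r (X ω)) * (τt (X ω) - (μ1 (X ω) - μ0 (X ω))))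
          =ᵐ[P] 0 := by
        filter_upwards [h] with ω hω
        simp [hω]
      exact ⟨hP1.trans hz, hP2.trans hz⟩
  · -- Part 4 : Neyman orthogonality
    intro he h0 h1 hhem hh0m hh1m hCe' hC0' hC1' hδ'
    obtain ⟨C0, hC0⟩ := hC0'
    obtain ⟨C1, hC1⟩ := hC1'
    obtain ⟨δ, hδ, c0, hc0, hball⟩ := hδ'
    refine ⟨fun t ω => if |t| < δ then
        r (X ω) * (1 - r (X ω)) * (t * (-(h1 (X ω) - h0 (X ω))
          + e (X ω) * h1 (X ω) / (e (X ω) + t * he (X ω))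
          - (1 - e (X ω)) * h0 (X ω) / (1 - (e (X ω) + t * he (X ω)))))
      else
        (P[(fun ω => r (X ω) * (1 - r (X ω)) * ((μ1 (X ω) - μ0 (X ω)) - ((μ1 (X ω) + t * h1 (X ω)) - (μ0 (X ω) + t * h0 (X ω))) - (W ω - (e (X ω) + t * he (X ω))) * (Y ω - W ω * (μ1 (X ω) + t * h1 (X ω)) - (1 - W ω) * (μ0 (X ω) + t * h0 (X ω))) / ((e (X ω) + t * he (X ω)) * (1 - (e (X ω) + t * he (X ω))))))|sigmaAlg X]) ω,
      fun t => ?_, ?_⟩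
    · -- identification of g t with the conditional expectation
      by_cases ht : |t| < δ
      · have hres := condExp_aipw X hX W hWm hWbin Y0 Y1 hY0m hY1m CY hYbdd Y hSUTVA hUnconf
          e hem hprop hoverlap μ0 μ1 hμ0m hμ1m hμ0c hμ1c
          (fun x => r x * (1 - r x)) (fun x => μ1 x - μ0 x)
          (fun x => μ0 x + t * h0 x) (fun x => μ1 x + t * h1 x) (fun x => e x + t * he x)
          hqmeas (hμ1m.sub hμ0m) (hμ0m.add (measurable_const.mul hh0m))
          (hμ1m.add (measurable_const.mul hh1m)) (hem.add (measurable_const.mul hhem))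
          (1 + c0⁻¹ + (|Cμ| + |Cμ|) + (|Cμ| + |t| * |C1|) + (|Cμ| + |t| * |C0|))
          (Eventually.of_forall fun ω => (hqb1 _).trans
            (by linarith [abs_nonneg Cμ, inv_nonneg.mpr hc0.le,
              mul_nonneg (abs_nonneg t) (abs_nonneg C0),
              mul_nonneg (abs_nonneg t) (abs_nonneg C1)]))
          (by
            filter_upwards [hball t ht] with ω hb
            obtain ⟨hl, hr'⟩ := hb
            have h0lt : 0 < e (X ω) + t * he (X ω) := lt_of_lt_of_le hc0 hl
            have hlt1 : e (X ω) + t * he (X ω) < 1 := lt_of_le_of_lt hr' (by linarith)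
            refine ⟨⟨h0lt, hlt1⟩, ?_, ?_⟩
            · rw [abs_div]
              calc |r (X ω) * (1 - r (X ω))| / |e (X ω) + t * he (X ω)| ≤ 1 / c0 :=
                  div_le_div₀ zero_le_one (hqb1 _) hc0 (by rw [abs_of_pos h0lt]; exact hl)
                _ = c0⁻¹ := one_div _
                _ ≤ _ := by
                    linarith [abs_nonneg Cμ, mul_nonneg (abs_nonneg t) (abs_nonneg C0),
                      mul_nonneg (abs_nonneg t) (abs_nonneg C1)]
            · rw [abs_div]
              have hden : c0 ≤ |1 - (e (X ω) + t * he (X ω))| := by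
                rw [abs_of_pos (by linarith : (0:ℝ) < 1 - (e (X ω) + t * he (X ω)))]
                linarith
              calc |r (X ω) * (1 - r (X ω))| / |1 - (e (X ω) + t * he (X ω))| ≤ 1 / c0 :=
                  div_le_div₀ zero_le_one (hqb1 _) hc0 hden
                _ = c0⁻¹ := one_div _
                _ ≤ _ := by
                    linarith [abs_nonneg Cμ, mul_nonneg (abs_nonneg t) (abs_nonneg C0),
                      mul_nonneg (abs_nonneg t) (abs_nonneg C1)])
          (by
            intro x
            have hi : (0:ℝ) ≤ c0⁻¹ := inv_nonneg.mpr hc0.le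
            have ht0 : (0:ℝ) ≤ |t| * |C0| := mul_nonneg (abs_nonneg t) (abs_nonneg C0)
            have ht1 : (0:ℝ) ≤ |t| * |C1| := mul_nonneg (abs_nonneg t) (abs_nonneg C1)
            have hμ0x := abs_le.mp ((hμbdd x).1.trans (le_abs_self _))
            have hμ1x := abs_le.mp ((hμbdd x).2.trans (le_abs_self _))
            refine ⟨?_, ?_, ?_⟩
            · have hbb : |μ1 x - μ0 x| ≤ |Cμ| + |Cμ| :=
                abs_le.mpr ⟨by linarith [hμ0x.2, hμ1x.1], by linarith [hμ0x.1, hμ1x.2]⟩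
              exact hbb.trans (by linarith [abs_nonneg Cμ])
            · have hb0 : |μ0 x + t * h0 x| ≤ |Cμ| + |t| * |C0| := by
                calc |μ0 x + t * h0 x| ≤ |μ0 x| + |t * h0 x| := abs_add_le _ _
                  _ ≤ |Cμ| + |t| * |C0| := by
                      refine add_le_add ((hμbdd x).1.trans (le_abs_self _)) ?_
                      rw [abs_mul]
                      exact mul_le_mul_of_nonneg_left
                        ((hC0 x).trans (le_abs_self _)) (abs_nonneg t)
              exact hb0.trans (by linarith [abs_nonneg Cμ])
            · have hb1 : |μ1 x + t * h1 x| ≤ |Cμ| + |t| * |C1| := by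
                calc |μ1 x + t * h1 x| ≤ |μ1 x| + |t * h1 x| := abs_add_le _ _
                  _ ≤ |Cμ| + |t| * |C1| := by
                      refine add_le_add ((hμbdd x).2.trans (le_abs_self _)) ?_
                      rw [abs_mul]
                      exact mul_le_mul_of_nonneg_left
                        ((hC1 x).trans (le_abs_self _)) (abs_nonneg t)
              exact hb1.trans (by linarith [abs_nonneg Cμ]))
        refine EventuallyEq.trans ?_ hres.symm
        refine Eventually.of_forall fun ω => ?_
        simp only [if_pos ht]
        ring
      · simp only [if_neg ht]
        exact EventuallyEq.rfl
    · -- derivative at 0 is 0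
      filter_upwards [hoverlap] with ω hov
      have hne1 : e (X ω) ≠ 0 := ne_of_gt hov.1
      have hne2 : (1:ℝ) - e (X ω) ≠ 0 := ne_of_gt (by linarith [hov.2])
      have hmem : ∀ᶠ t : ℝ in nhds 0, |t| < δ := by
        simpa using eventually_abs_sub_lt (0:ℝ) hδ
      have c1 : HasDerivAt (fun t : ℝ => e (X ω) + t * he (X ω)) (1 * he (X ω)) 0 :=
        ((hasDerivAt_id (0:ℝ)).mul_const (he (X ω))).const_add (e (X ω))
      have hd1 : e (X ω) + 0 * he (X ω) ≠ 0 := by simpa using hne1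
      have hd2 : 1 - (e (X ω) + 0 * he (X ω)) ≠ 0 := by simpa using hne2
      have c2 := (hasDerivAt_const (0:ℝ) (e (X ω) * h1 (X ω))).div c1 hd1
      have c3 := (hasDerivAt_const (0:ℝ) ((1 - e (X ω)) * h0 (X ω))).div
        (c1.const_sub 1) hd2
      have hψ := (c2.const_add (-(h1 (X ω) - h0 (X ω)))).sub c3
      have hprod := (hasDerivAt_id (0:ℝ)).mul hψ
      have hfin := hprod.const_mul (r (X ω) * (1 - r (X ω)))
      have hev : (fun t : ℝ => if |t| < δ then
          r (X ω) * (1 - r (X ω)) * (t * (-(h1 (X ω) - h0 (X ω))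
            + e (X ω) * h1 (X ω) / (e (X ω) + t * he (X ω))
            - (1 - e (X ω)) * h0 (X ω) / (1 - (e (X ω) + t * he (X ω)))))
        else
          (P[(fun ω => r (X ω) * (1 - r (X ω)) * ((μ1 (X ω) - μ0 (X ω)) - ((μ1 (X ω) + t * h1 (X ω)) - (μ0 (X ω) + t * h0 (X ω))) - (W ω - (e (X ω) + t * he (X ω))) * (Y ω - W ω * (μ1 (X ω) + t * h1 (X ω)) - (1 - W ω) * (μ0 (X ω) + t * h0 (X ω))) / ((e (X ω) + t * he (X ω)) * (1 - (e (X ω) + t * he (X ω))))))|sigmaAlg X]) ω)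
          =ᶠ[nhds (0:ℝ)] (fun t : ℝ =>
            r (X ω) * (1 - r (X ω)) * (id t * (-(h1 (X ω) - h0 (X ω))
              + e (X ω) * h1 (X ω) / (e (X ω) + t * he (X ω))
              - (1 - e (X ω)) * h0 (X ω) / (1 - (e (X ω) + t * he (X ω)))))) := by
        filter_upwards [hmem] with t ht
        simp only [if_pos ht, id_eq]
      have hder := hfin.congr_of_eventuallyEq hev
      refine hder.congr_deriv ?_
      symm
      show (0:ℝ) = r (X ω) * (1 - r (X ω)) * (1 * (-(h1 (X ω) - h0 (X ω))
        + e (X ω) * h1 (X ω) / (e (X ω) + 0 * he (X ω))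
        - (1 - e (X ω)) * h0 (X ω) / (1 - (e (X ω) + 0 * he (X ω)))) + id 0 * _)
      simp only [id_eq, zero_mul, mul_zero, add_zero, one_mul, zero_add]
      field_simp
      ring
end
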